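/- arXiv:2601.05550 — 8 statements merged into one kernel-verified Lean document; each statement's English description precedes it below -/
import Mathlib

section
/- Let g : ℝ → ℝ be continuous, non-decreasing and everywhere positive, and let C > 0, q ≥ 0, θ > 0 and τ be constants with θq < τ < θq + 1. Suppose for some a ∈ ℝ there exists v : [0,∞) → ℝ solving the Cauchy problem (★) on all of [0,∞) with v(0) = a, with right derivative v'(0) = 0 at the origin, and with v'(r) > 0 and v''(r) > 0 for all r > 0. Then the Keller–Osserman condition holds: ∫_b^∞ (∫_0^t g(s) ds)^{-1/(θ+1)} dt = +∞ for every b > 0. -/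
open Real MeasureTheory Set Filter Topology ENNReal

/-- The right-hand side of the Cauchy problem (★):
`C · r^{-q} · (∫_0^r s^{τ-1} g(v(s)) ds)^{1/θ}`. -/
noncomputable def cauchyRHS (C q τ θ : ℝ) (g v : ℝ → ℝ) (r : ℝ) : ℝ :=
  C * r ^ (-q) * (∫ s in (0:ℝ)..r, s ^ (τ - 1) * g (v s)) ^ (1 / θ)

/-- `v : ℝ → ℝ` solves the Cauchy problem (★) on `[0, R)` (with `R ∈ (0, ∞]` an
extended nonnegative real): `v` is continuous on `[0, R)`, `v 0 = a`, and at every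
`r ∈ (0, R)` the derivative of `v` exists and is given by `cauchyRHS`. -/
def SolvesCauchy (C q τ θ a : ℝ) (g : ℝ → ℝ) (R : ℝ≥0∞) (v : ℝ → ℝ) : Prop :=
  ContinuousOn v {r : ℝ | 0 ≤ r ∧ ENNReal.ofReal r < R} ∧
  v 0 = a ∧
  ∀ r : ℝ, 0 < r → ENNReal.ofReal r < R → HasDerivAt v (cauchyRHS C q τ θ g v r) r

/-- The Keller–Osserman condition:
`∫_b^∞ (∫_0^t g(s) ds)^{-1/(θ+1)} dt = +∞` for every `b > 0`. -/
def KellerOsserman (θ : ℝ) (g : ℝ → ℝ) : Prop :=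
  ∀ b : ℝ, 0 < b →
    ∫⁻ t in Set.Ioi b, ENNReal.ofReal ((∫ s in (0:ℝ)..t, g s) ^ (-(1 / (θ + 1)))) = ⊤

/-- Auxiliary primitive `F(r) = ∫_0^r s^{τ-1} g(v(s)) ds`. -/
noncomputable def Faux (τ : ℝ) (g v : ℝ → ℝ) (r : ℝ) : ℝ :=
  ∫ s in (0:ℝ)..r, s ^ (τ - 1) * g (v s)

/-- Auxiliary primitive `G(t) = ∫_0^t g(s) ds`. -/
noncomputable def Gaux (g : ℝ → ℝ) (t : ℝ) : ℝ :=
  ∫ s in (0:ℝ)..t, g s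

/-- If `f` has nonnegative derivative on `[a, b]`, then `f a ≤ f b`. -/
lemma le_of_hasDerivAt_nonneg {f f' : ℝ → ℝ} {a b : ℝ} (hab : a ≤ b)
    (hf : ∀ x ∈ Set.Icc a b, HasDerivAt f (f' x) x)
    (h0 : ∀ x ∈ Set.Icc a b, 0 ≤ f' x) : f a ≤ f b := by
  have hc : ContinuousOn f (Set.Icc a b) := fun x hx =>
    (hf x hx).continuousAt.continuousWithinAt
  have hmono := monotoneOn_of_deriv_nonneg (convex_Icc a b) hc
    (fun x hx => by
      rw [interior_Icc] at hx
      exact ((hf x (Set.Ioo_subset_Icc_self hx)).differentiableAt).differentiableWithinAt)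
    (fun x hx => by
      rw [interior_Icc] at hx
      rw [(hf x (Set.Ioo_subset_Icc_self hx)).deriv]
      exact h0 x (Set.Ioo_subset_Icc_self hx))
  exact hmono (Set.left_mem_Icc.2 hab) (Set.right_mem_Icc.2 hab) hab

set_option maxHeartbeats 2000000 in
/-- Part (b) of Theorem 1.3: if `θq < τ < θq + 1` and for some `a` the Cauchy problem
(★) has an entire solution on `[0, ∞)` with right derivative `0` at the origin and
with `v' > 0` and `v'' > 0` on `(0, ∞)`, then the Keller–Osserman condition holds. -/
theorem KO_of_entire_existence_small_tau
    (g : ℝ → ℝ) (hg_cont : Continuous g) (hg_mono : Monotone g) (hg_pos : ∀ t, 0 < g t)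
    (C q θ τ : ℝ) (hC : 0 < C) (hq : 0 ≤ q) (hθ : 0 < θ)
    (hτ1 : θ * q < τ) (hτ2 : τ < θ * q + 1)
    (a : ℝ) (v : ℝ → ℝ)
    (hv : SolvesCauchy C q τ θ a g ⊤ v)
    (hv0 : HasDerivWithinAt v 0 (Set.Ici 0) 0)
    (hpos : ∀ r : ℝ, 0 < r →
      0 < deriv v r ∧ DifferentiableAt ℝ (deriv v) r ∧ 0 < deriv (deriv v) r) :
    KellerOsserman θ g := by
  have hτpos : 0 < τ := lt_of_le_of_lt (mul_nonneg hθ.le hq) hτ1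
  have hθ1 : (0:ℝ) < θ + 1 := by linarith
  obtain ⟨hvc0, hva, hvd0⟩ := hv
  have hvc : ContinuousOn v (Set.Ici 0) := by
    have hset : {r : ℝ | 0 ≤ r ∧ ENNReal.ofReal r < ⊤} = Set.Ici 0 := by
      ext r; simp [ENNReal.ofReal_lt_top]
    rwa [hset] at hvc0
  have hvd : ∀ r : ℝ, 0 < r → HasDerivAt v (cauchyRHS C q τ θ g v r) r :=
    fun r hr => hvd0 r hr (by simp)
  have hvd' : ∀ r : ℝ, 0 < r → HasDerivAt v (deriv v r) r :=
    fun r hr => (hvd r hr).differentiableAt.hasDerivAt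
  have hv' : ∀ r : ℝ, 0 < r → deriv v r = C * r ^ (-q) * Faux τ g v r ^ (1/θ) := by
    intro r hr
    rw [(hvd r hr).deriv]
    rfl
  -- monotonicity of v
  have hvmono : StrictMonoOn v (Set.Ici 0) := by
    apply strictMonoOn_of_deriv_pos (convex_Ici 0) hvc
    intro x hx
    rw [interior_Ici] at hx
    exact (hpos x hx).1
  have hvle : ∀ {x y : ℝ}, 0 ≤ x → x ≤ y → v x ≤ v y := by
    intro x y hx hxy
    exact hvmono.monotoneOn hx (le_trans hx hxy) hxy
  -- the integrand h
  have hh_nonneg : ∀ s : ℝ, 0 ≤ s → 0 ≤ s ^ (τ - 1) * g (v s) := fun s hs =>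
    mul_nonneg (Real.rpow_nonneg hs _) (hg_pos _).le
  have hgv_cont : ContinuousOn (fun s => g (v s)) (Set.Ici 0) :=
    hg_cont.comp_continuousOn hvc
  have hh_cont : ContinuousOn (fun s => s ^ (τ - 1) * g (v s)) (Set.Ioi 0) := by
    apply ContinuousOn.mul
    · intro s hs
      exact (Real.continuousAt_rpow_const s _ (Or.inl (ne_of_gt hs))).continuousWithinAt
    · exact hgv_cont.mono (Set.Ioi_subset_Ici le_rfl)
  -- integrability
  have hInt : ∀ r : ℝ, 0 < r →
      IntervalIntegrable (fun s => s ^ (τ - 1) * g (v s)) volume 0 r := by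
    intro r hr
    rw [intervalIntegrable_iff_integrableOn_Ioc_of_le hr.le]
    have hmaj : IntegrableOn (fun s : ℝ => g (v r) * s ^ (τ - 1)) (Set.Ioc 0 r) := by
      have h1 := intervalIntegral.intervalIntegrable_rpow' (a := 0) (b := r)
        (show (-1:ℝ) < τ - 1 by linarith)
      exact ((intervalIntegrable_iff_integrableOn_Ioc_of_le hr.le).1 h1).const_mul _
    apply hmaj.mono' ?_ ?_
    · exact (hh_cont.mono (fun x hx => hx.1)).aestronglyMeasurable measurableSet_Ioc
    · filter_upwards [MeasureTheory.ae_restrict_mem measurableSet_Ioc] with s hs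
      rw [Real.norm_eq_abs, abs_of_nonneg (hh_nonneg s hs.1.le), mul_comm (g (v r))]
      exact mul_le_mul_of_nonneg_left (hg_mono (hvle hs.1.le hs.2)) (Real.rpow_nonneg hs.1.le _)
  have hInt' : ∀ x y : ℝ, 0 < x → 0 < y →
      IntervalIntegrable (fun s => s ^ (τ - 1) * g (v s)) volume x y :=
    fun x y hx hy => ((hInt x hx).symm.trans (hInt y hy))
  -- F positive and its derivative
  have hFpos : ∀ r : ℝ, 0 < r → 0 < Faux τ g v r := fun r hr =>
    intervalIntegral.intervalIntegral_pos_of_pos_on (hInt r hr)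
      (fun x hx => mul_pos (Real.rpow_pos_of_pos hx.1 _) (hg_pos _)) hr
  have hFder : ∀ r : ℝ, 0 < r →
      HasDerivAt (Faux τ g v) (r ^ (τ - 1) * g (v r)) r := fun r hr =>
    intervalIntegral.integral_hasDerivAt_right (hInt r hr)
      (hh_cont.stronglyMeasurableAtFilter isOpen_Ioi r hr)
      (hh_cont.continuousAt (Ioi_mem_nhds hr))
  -- upper bound on F
  have hFub : ∀ r : ℝ, 0 < r → Faux τ g v r ≤ g (v r) * r ^ τ / τ := by
    intro r hr
    have hmaj : IntervalIntegrable (fun s : ℝ => g (v r) * s ^ (τ - 1)) volume 0 r :=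
      (intervalIntegral.intervalIntegrable_rpow' (show (-1:ℝ) < τ - 1 by linarith)).const_mul _
    have h1 : Faux τ g v r ≤ ∫ s in (0:ℝ)..r, g (v r) * s ^ (τ - 1) := by
      apply intervalIntegral.integral_mono_on hr.le (hInt r hr) hmaj
      intro x hx
      rw [mul_comm (g (v r))]
      exact mul_le_mul_of_nonneg_left (hg_mono (hvle hx.1 hx.2)) (Real.rpow_nonneg hx.1 _)
    have h2 : ∫ s in (0:ℝ)..r, g (v r) * s ^ (τ - 1) = g (v r) * (r ^ τ / τ) := by
      rw [intervalIntegral.integral_const_mul, integral_rpow (Or.inl (by linarith : (-1:ℝ) < τ - 1))]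
      rw [show τ - 1 + 1 = τ by ring, Real.zero_rpow hτpos.ne', sub_zero]
    rw [h2] at h1
    rwa [mul_div_assoc]
  -- G : primitive of g
  have hGder : ∀ y : ℝ, HasDerivAt (Gaux g) (g y) y := fun y =>
    intervalIntegral.integral_hasDerivAt_right (hg_cont.intervalIntegrable 0 y)
      (hg_cont.stronglyMeasurableAtFilter _ _) hg_cont.continuousAt
  have hGpos : ∀ u : ℝ, 0 < u → 0 < Gaux g u := fun u hu =>
    intervalIntegral.intervalIntegral_pos_of_pos_on (hg_cont.intervalIntegrable 0 u)
      (fun x _ => hg_pos x) hu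
  have hGlb : ∀ t : ℝ, 0 ≤ t → g 0 * t ≤ Gaux g t := by
    intro t ht
    have h1 : ∫ s in (0:ℝ)..t, g 0 ≤ Gaux g t :=
      intervalIntegral.integral_mono_on ht intervalIntegrable_const
        (hg_cont.intervalIntegrable 0 t) (fun x hx => hg_mono hx.1)
    simpa [intervalIntegral.integral_const, smul_eq_mul, mul_comm] using h1
  -- Φ = G ∘ v
  have hΦder : ∀ r : ℝ, 0 < r →
      HasDerivAt (fun s => Gaux g (v s)) (g (v r) * deriv v r) r := by
    intro r hr
    have := (hGder (v r)).comp r (hvd' r hr)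
    simpa [Function.comp_def] using this
  -- Z and its derivative
  have hZder : ∀ r : ℝ, 0 < r →
      HasDerivAt (fun s => Faux τ g v s ^ ((θ+1)/θ) * s ^ (-(q + τ - 1)))
      (((θ+1)/θ * Faux τ g v r ^ ((θ+1)/θ - 1) * (r ^ (τ - 1) * g (v r))) * r ^ (-(q + τ - 1)) +
        Faux τ g v r ^ ((θ+1)/θ) * (-(q + τ - 1) * r ^ (-(q + τ - 1) - 1))) r := by
    intro r hr
    have h := ((hFder r hr).rpow_const (p := (θ+1)/θ) (Or.inl (hFpos r hr).ne')).mul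
      (Real.hasDerivAt_rpow_const (Or.inl hr.ne') (p := -(q + τ - 1)))
    exact h.congr_deriv (by ring)
  -- the key pointwise inequality
  have hκpos : 0 < min ((θ+1)/θ) ((θ+1)/θ - (q + τ - 1)/τ) := by
    apply lt_min (by positivity)
    have hrw : (θ+1)/θ - (q + τ - 1)/τ = (τ - θ*q + θ)/(θ*τ) := by
      field_simp; ring
    rw [hrw]
    apply div_pos (by linarith) (by positivity)
  set κ : ℝ := min ((θ+1)/θ) ((θ+1)/θ - (q + τ - 1)/τ) with hκdef
  set K1 : ℝ := κ / C with hK1def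
  have hK1pos : 0 < K1 := div_pos hκpos hC
  have hkey : ∀ r : ℝ, 0 < r →
      K1 * (g (v r) * deriv v r) ≤
      ((θ+1)/θ * Faux τ g v r ^ ((θ+1)/θ - 1) * (r ^ (τ - 1) * g (v r))) * r ^ (-(q + τ - 1)) +
        Faux τ g v r ^ ((θ+1)/θ) * (-(q + τ - 1) * r ^ (-(q + τ - 1) - 1)) := by
    intro r hr
    have hFr := hFpos r hr
    have hA : (0:ℝ) < Faux τ g v r ^ (1/θ) := Real.rpow_pos_of_pos hFr _
    have hB := hg_pos (v r)
    have hrq : (0:ℝ) < r ^ (-q) := Real.rpow_pos_of_pos hr _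
    have hre : (0:ℝ) < r ^ (-(q + τ - 1)) := Real.rpow_pos_of_pos hr _
    have hre1 : (0:ℝ) < r ^ (-(q + τ - 1) - 1) := Real.rpow_pos_of_pos hr _
    have hrt : (0:ℝ) < r ^ τ := Real.rpow_pos_of_pos hr _
    have hrt1 : (0:ℝ) < r ^ (τ - 1) := Real.rpow_pos_of_pos hr _
    have hx1 : (θ+1)/θ - 1 = 1/θ := by field_simp; ring
    have hx2 : Faux τ g v r ^ ((θ+1)/θ) = Faux τ g v r ^ (1/θ) * Faux τ g v r := by
      rw [show (θ+1)/θ = 1/θ + 1 by field_simp; ring, Real.rpow_add hFr, Real.rpow_one]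
    have hx3 : r ^ (τ - 1) * r ^ (-(q + τ - 1)) = r ^ (-q) := by
      rw [← Real.rpow_add hr]; congr 1; ring
    have hx4 : r ^ τ * r ^ (-(q + τ - 1) - 1) = r ^ (-q) := by
      rw [← Real.rpow_add hr]; congr 1; ring
    have hder : deriv v r = C * r ^ (-q) * Faux τ g v r ^ (1/θ) := hv' r hr
    rw [hx1, hx2, hder]
    rcases le_or_gt (q + τ - 1) 0 with he0 | he0
    · -- e ≤ 0 : the second summand is nonneg, use κ ≤ (θ+1)/θ
      have h5 : K1 * (g (v r) * (C * r ^ (-q) * Faux τ g v r ^ (1/θ))) =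
          κ * (g (v r) * r ^ (-q) * Faux τ g v r ^ (1/θ)) := by
        rw [hK1def]; field_simp
      have h6 : κ * (g (v r) * r ^ (-q) * Faux τ g v r ^ (1/θ)) ≤
          (θ+1)/θ * (g (v r) * r ^ (-q) * Faux τ g v r ^ (1/θ)) :=
        mul_le_mul_of_nonneg_right (min_le_left _ _) (by positivity)
      have h7 : (θ+1)/θ * (g (v r) * r ^ (-q) * Faux τ g v r ^ (1/θ)) =
          ((θ+1)/θ * Faux τ g v r ^ (1/θ) * (r ^ (τ - 1) * g (v r))) * r ^ (-(q + τ - 1)) := by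
        rw [← hx3]; ring
      have h8 : 0 ≤ Faux τ g v r ^ (1/θ) * Faux τ g v r *
          (-(q + τ - 1) * r ^ (-(q + τ - 1) - 1)) := by
        apply mul_nonneg (mul_nonneg hA.le hFr.le)
        exact mul_nonneg (neg_nonneg.2 he0) hre1.le
      linarith
    · -- e > 0 : use the upper bound on F
      have hFub' := hFub r hr
      have hterm2 : (q + τ - 1) * (Faux τ g v r ^ (1/θ) * Faux τ g v r * r ^ (-(q + τ - 1) - 1)) ≤
          (q + τ - 1) * (Faux τ g v r ^ (1/θ) * (g (v r) * r ^ τ / τ) * r ^ (-(q + τ - 1) - 1)) := by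
        apply mul_le_mul_of_nonneg_left ?_ he0.le
        apply mul_le_mul_of_nonneg_right ?_ hre1.le
        exact mul_le_mul_of_nonneg_left hFub' hA.le
      have hEq0 : K1 * (g (v r) * (C * r ^ (-q) * Faux τ g v r ^ (1/θ))) =
          κ * (Faux τ g v r ^ (1/θ) * g (v r) * r ^ (-q)) := by
        rw [hK1def]; field_simp
      have hEq1 : ((θ+1)/θ * Faux τ g v r ^ (1/θ) * (r ^ (τ - 1) * g (v r))) * r ^ (-(q + τ - 1)) =
          (θ+1)/θ * (Faux τ g v r ^ (1/θ) * g (v r) * r ^ (-q)) := by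
        rw [← hx3]; ring
      have hEq2 : (q + τ - 1) * (Faux τ g v r ^ (1/θ) * (g (v r) * r ^ τ / τ) * r ^ (-(q + τ - 1) - 1)) =
          (q + τ - 1)/τ * (Faux τ g v r ^ (1/θ) * g (v r) * r ^ (-q)) := by
        rw [← hx4]; ring
      have hABq : (0:ℝ) ≤ Faux τ g v r ^ (1/θ) * g (v r) * r ^ (-q) := by positivity
      have h9 := mul_le_mul_of_nonneg_right
        (min_le_right ((θ+1)/θ) ((θ+1)/θ - (q + τ - 1)/τ)) hABq
      rw [hEq0]
      nlinarith [hterm2, hEq2, hEq1, h9]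
  -- comparison: Z(R) dominates K1 * (Φ(R) - Φ(1))
  have hZcomp : ∀ R : ℝ, 1 ≤ R →
      K1 * (Gaux g (v R) - Gaux g (v 1)) ≤
      Faux τ g v R ^ ((θ+1)/θ) * R ^ (-(q + τ - 1)) := by
    intro R hR
    have h0 := le_of_hasDerivAt_nonneg (f := fun s =>
        Faux τ g v s ^ ((θ+1)/θ) * s ^ (-(q + τ - 1)) - K1 * Gaux g (v s))
      (f' := fun x =>
        (((θ+1)/θ * Faux τ g v x ^ ((θ+1)/θ - 1) * (x ^ (τ - 1) * g (v x))) * x ^ (-(q + τ - 1)) +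
          Faux τ g v x ^ ((θ+1)/θ) * (-(q + τ - 1) * x ^ (-(q + τ - 1) - 1))) -
          K1 * (g (v x) * deriv v x)) hR
      (fun x hx => by
        have hx0 : (0:ℝ) < x := lt_of_lt_of_le one_pos hx.1
        exact (hZder x hx0).sub ((hΦder x hx0).const_mul K1))
      (fun x hx => by
        have hx0 : (0:ℝ) < x := lt_of_lt_of_le one_pos hx.1
        exact sub_nonneg.2 (hkey x hx0))
    have hZ1 : (0:ℝ) ≤ Faux τ g v 1 ^ ((θ+1)/θ) * (1:ℝ) ^ (-(q + τ - 1)) :=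
      mul_nonneg (Real.rpow_nonneg (hFpos 1 one_pos).le _) (Real.rpow_nonneg zero_le_one _)
    linarith
  -- lower bound on F for s ≥ 1, and a linear lower bound on v
  have hFlb : ∀ s : ℝ, 1 ≤ s → g (v 1) * ((s ^ τ - 1)/τ) ≤ Faux τ g v s := by
    intro s hs
    have hs0 : (0:ℝ) < s := lt_of_lt_of_le one_pos hs
    have hint1s : IntervalIntegrable (fun u => u ^ (τ - 1) * g (v u)) volume 1 s :=
      hInt' 1 s one_pos hs0
    have hadd : Faux τ g v 1 + (∫ u in (1:ℝ)..s, u ^ (τ - 1) * g (v u)) = Faux τ g v s :=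
      intervalIntegral.integral_add_adjacent_intervals (hInt 1 one_pos) hint1s
    have hmaj : IntervalIntegrable (fun u : ℝ => g (v 1) * u ^ (τ - 1)) volume 1 s :=
      (intervalIntegral.intervalIntegrable_rpow' (show (-1:ℝ) < τ - 1 by linarith)).const_mul _
    have hmono2 : (∫ u in (1:ℝ)..s, g (v 1) * u ^ (τ - 1)) ≤
        ∫ u in (1:ℝ)..s, u ^ (τ - 1) * g (v u) := by
      apply intervalIntegral.integral_mono_on hs hmaj hint1s
      intro x hx
      have hx0 : (0:ℝ) ≤ x := le_trans zero_le_one hx.1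
      rw [mul_comm (g (v 1))]
      exact mul_le_mul_of_nonneg_left (hg_mono (hvle zero_le_one hx.1)) (Real.rpow_nonneg hx0 _)
    have hval : (∫ u in (1:ℝ)..s, g (v 1) * u ^ (τ - 1)) = g (v 1) * ((s ^ τ - 1)/τ) := by
      rw [intervalIntegral.integral_const_mul,
        integral_rpow (Or.inl (by linarith : (-1:ℝ) < τ - 1)),
        show τ - 1 + 1 = τ by ring, Real.one_rpow]
    have hF1 : 0 < Faux τ g v 1 := hFpos 1 one_pos
    linarith [hmono2, hval ▸ hmono2]
  -- lower bound on the derivative of v far out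
  have hδ : 0 ≤ τ/θ - q := by
    rw [sub_nonneg, le_div_iff₀ hθ]; linarith [mul_comm q θ]
  have hc4pos : 0 < C * (g (v 1) / (2*τ)) ^ (1/θ) := by
    have := hg_pos (v 1); positivity
  have hdlb : ∀ s : ℝ, max 1 ((2:ℝ) ^ (1/τ)) ≤ s → C * (g (v 1) / (2*τ)) ^ (1/θ) ≤ deriv v s := by
    intro s hs
    have hs1 : (1:ℝ) ≤ s := le_trans (le_max_left _ _) hs
    have hs0 : (0:ℝ) < s := lt_of_lt_of_le one_pos hs1
    have h2 : (2:ℝ) ≤ s ^ τ := by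
      have h21 : (2:ℝ)^(1/τ) ≤ s := le_trans (le_max_right _ _) hs
      calc (2:ℝ) = ((2:ℝ)^(1/τ))^τ := by
            rw [← Real.rpow_mul (by norm_num : (0:ℝ) ≤ 2), one_div_mul_cancel hτpos.ne',
              Real.rpow_one]
        _ ≤ s ^ τ := Real.rpow_le_rpow (by positivity) h21 hτpos.le
    have hFs : g (v 1) / (2*τ) * s ^ τ ≤ Faux τ g v s := by
      have h3 := hFlb s hs1
      have h41 : s ^ τ / 2 / τ ≤ (s ^ τ - 1)/τ := by
        have : s ^ τ / 2 ≤ s ^ τ - 1 := by linarith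
        gcongr
      have h4 : g (v 1) / (2*τ) * s ^ τ ≤ g (v 1) * ((s ^ τ - 1)/τ) := by
        calc g (v 1) / (2*τ) * s ^ τ = g (v 1) * (s ^ τ / 2 / τ) := by ring
          _ ≤ g (v 1) * ((s ^ τ - 1)/τ) :=
            mul_le_mul_of_nonneg_left h41 (hg_pos (v 1)).le
      linarith
    have hg1 := hg_pos (v 1)
    have h5 : (g (v 1) / (2*τ)) ^ (1/θ) * s ^ (τ/θ) ≤ Faux τ g v s ^ (1/θ) := by
      have h6 : ((g (v 1) / (2*τ)) * s ^ τ) ^ (1/θ) ≤ Faux τ g v s ^ (1/θ) :=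
        Real.rpow_le_rpow (by positivity) hFs (by positivity)
      rwa [Real.mul_rpow (by positivity) (by positivity), ← Real.rpow_mul hs0.le,
        mul_one_div] at h6
    have hsq : (0:ℝ) < s ^ (-q) := Real.rpow_pos_of_pos hs0 _
    have h7 : C * s ^ (-q) * ((g (v 1) / (2*τ)) ^ (1/θ) * s ^ (τ/θ)) ≤
        C * s ^ (-q) * Faux τ g v s ^ (1/θ) :=
      mul_le_mul_of_nonneg_left h5 (by positivity)
    have h8 : C * s ^ (-q) * ((g (v 1) / (2*τ)) ^ (1/θ) * s ^ (τ/θ)) =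
        C * (g (v 1) / (2*τ)) ^ (1/θ) * s ^ (τ/θ - q) := by
      rw [show τ/θ - q = -q + τ/θ by ring, Real.rpow_add hs0]
      ring
    have h9 : (1:ℝ) ≤ s ^ (τ/θ - q) := by
      calc (1:ℝ) = s ^ (0:ℝ) := (Real.rpow_zero s).symm
        _ ≤ s ^ (τ/θ - q) := Real.rpow_le_rpow_of_exponent_le hs1 hδ
    rw [hv' s hs0]
    calc C * (g (v 1) / (2*τ)) ^ (1/θ)
        = C * (g (v 1) / (2*τ)) ^ (1/θ) * 1 := (mul_one _).symm
      _ ≤ C * (g (v 1) / (2*τ)) ^ (1/θ) * s ^ (τ/θ - q) :=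
          mul_le_mul_of_nonneg_left h9 (by positivity)
      _ = C * s ^ (-q) * ((g (v 1) / (2*τ)) ^ (1/θ) * s ^ (τ/θ)) := h8.symm
      _ ≤ C * s ^ (-q) * Faux τ g v s ^ (1/θ) := h7
  -- v grows at least linearly beyond R0
  have hR0ge1 : (1:ℝ) ≤ max 1 ((2:ℝ) ^ (1/τ)) := le_max_left _ _
  have hvlin : ∀ R : ℝ, max 1 ((2:ℝ) ^ (1/τ)) ≤ R →
      v (max 1 ((2:ℝ) ^ (1/τ))) +
        C * (g (v 1) / (2*τ)) ^ (1/θ) * (R - max 1 ((2:ℝ) ^ (1/τ))) ≤ v R := by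
    intro R hR
    have h0 := le_of_hasDerivAt_nonneg (a := max 1 ((2:ℝ) ^ (1/τ))) (b := R)
      (f := fun s => v s - C * (g (v 1) / (2*τ)) ^ (1/θ) * s)
      (f' := fun s => deriv v s - C * (g (v 1) / (2*τ)) ^ (1/θ)) hR
      (fun x hx => by
        have hx0 : (0:ℝ) < x := lt_of_lt_of_le (lt_of_lt_of_le one_pos hR0ge1) hx.1
        exact (hvd' x hx0).sub
          (by simpa using (hasDerivAt_id x).const_mul (C * (g (v 1) / (2*τ)) ^ (1/θ))))
      (fun x hx => sub_nonneg.2 (hdlb x hx.1))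
    linarith
  have hvtop : Tendsto v atTop atTop := by
    have h1 : Tendsto (fun R : ℝ => R - max 1 ((2:ℝ) ^ (1/τ))) atTop atTop := by
      have := tendsto_atTop_add_const_right (α := ℝ) atTop (-(max 1 ((2:ℝ) ^ (1/τ)))) tendsto_id
      simpa [sub_eq_add_neg] using this
    have hbase : Tendsto (fun R : ℝ => v (max 1 ((2:ℝ) ^ (1/τ))) +
        C * (g (v 1) / (2*τ)) ^ (1/θ) * (R - max 1 ((2:ℝ) ^ (1/τ)))) atTop atTop :=
      tendsto_atTop_add_const_left atTop _ (h1.const_mul_atTop hc4pos)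
    have hev : (fun R : ℝ => v (max 1 ((2:ℝ) ^ (1/τ))) +
        C * (g (v 1) / (2*τ)) ^ (1/θ) * (R - max 1 ((2:ℝ) ^ (1/τ)))) ≤ᶠ[atTop] v := by
      filter_upwards [eventually_ge_atTop (max 1 ((2:ℝ) ^ (1/τ)))] with R hR using hvlin R hR
    exact tendsto_atTop_mono' atTop hev hbase
  have hΦtop : Tendsto (fun R => Gaux g (v R)) atTop atTop := by
    have hev : (fun R : ℝ => g 0 * v R) ≤ᶠ[atTop] fun R => Gaux g (v R) := by
      filter_upwards [hvtop.eventually_ge_atTop 0] with R hR using hGlb (v R) hR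
    exact tendsto_atTop_mono' atTop hev (hvtop.const_mul_atTop (hg_pos 0))
  -- choose r1
  obtain ⟨r1, hr11, hr1Φ⟩ : ∃ r1 : ℝ, 1 ≤ r1 ∧ 2*|Gaux g (v 1)| + 2 ≤ Gaux g (v r1) := by
    obtain ⟨r1, h1, h2⟩ := ((hΦtop.eventually_ge_atTop (2*|Gaux g (v 1)| + 2)).and
      (eventually_ge_atTop 1)).exists
    exact ⟨r1, h2, h1⟩
  have hr10 : (0:ℝ) < r1 := lt_of_lt_of_le one_pos hr11
  have hΦmono : ∀ R : ℝ, r1 ≤ R → Gaux g (v r1) ≤ Gaux g (v R) := by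
    intro R hR
    exact le_of_hasDerivAt_nonneg (a := r1) (b := R) (f := fun s => Gaux g (v s))
      (f' := fun x => g (v x) * deriv v x) hR
      (fun x hx => hΦder x (lt_of_lt_of_le hr10 hx.1))
      (fun x hx => mul_nonneg (hg_pos _).le (hpos x (lt_of_lt_of_le hr10 hx.1)).1.le)
  -- exponents
  have hβpos : 0 < (-q + (q + τ - 1)/(θ+1)) + 1 := by
    rw [show (-q + (q + τ - 1)/(θ+1)) + 1 = (τ - θ*q + θ)/(θ+1) by field_simp; ring]
    exact div_pos (by linarith) hθ1
  have hc3pos : 0 < C * (K1/2) ^ (1/(θ+1)) :=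
    mul_pos hC (Real.rpow_pos_of_pos (by linarith) _)
  -- the crucial lower bound for the derivative of v
  have hdvlb : ∀ R : ℝ, r1 ≤ R →
      C * (K1/2) ^ (1/(θ+1)) * R ^ (-q + (q + τ - 1)/(θ+1)) ≤
      deriv v R * Gaux g (v R) ^ (-(1/(θ+1))) := by
    intro R hR
    have hR1 : (1:ℝ) ≤ R := le_trans hr11 hR
    have hR0 : (0:ℝ) < R := lt_of_lt_of_le one_pos hR1
    have hΦR : 2*|Gaux g (v 1)| + 2 ≤ Gaux g (v R) := le_trans hr1Φ (hΦmono R hR)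
    have hΦRpos : (0:ℝ) < Gaux g (v R) := by
      have := abs_nonneg (Gaux g (v 1)); linarith
    have h1 : K1/2 * Gaux g (v R) ≤ Faux τ g v R ^ ((θ+1)/θ) * R ^ (-(q + τ - 1)) := by
      have h2 := hZcomp R hR1
      have h3 : Gaux g (v 1) ≤ |Gaux g (v 1)| := le_abs_self _
      have h4 : 0 ≤ K1 * (Gaux g (v R)/2 - Gaux g (v 1)) :=
        mul_nonneg hK1pos.le (by linarith)
      nlinarith
    have hRe : (0:ℝ) < R ^ (q + τ - 1) := Real.rpow_pos_of_pos hR0 _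
    have h5 : K1/2 * Gaux g (v R) * R ^ (q + τ - 1) ≤ Faux τ g v R ^ ((θ+1)/θ) := by
      have h6 := mul_le_mul_of_nonneg_right h1 hRe.le
      rw [mul_assoc (Faux τ g v R ^ ((θ+1)/θ)), ← Real.rpow_add hR0] at h6
      simpa using h6
    have hYpos : (0:ℝ) < K1/2 * Gaux g (v R) * R ^ (q + τ - 1) :=
      mul_pos (mul_pos (by linarith) hΦRpos) hRe
    have h7 : (K1/2 * Gaux g (v R) * R ^ (q + τ - 1)) ^ (θ/(θ+1)) ≤ Faux τ g v R := by
      have h8 := Real.rpow_le_rpow hYpos.le h5 (by positivity : (0:ℝ) ≤ θ/(θ+1))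
      rwa [← Real.rpow_mul (hFpos R hR0).le,
        show (θ+1)/θ * (θ/(θ+1)) = 1 by field_simp, Real.rpow_one] at h8
    have h9 : (K1/2 * Gaux g (v R) * R ^ (q + τ - 1)) ^ (1/(θ+1)) ≤ Faux τ g v R ^ (1/θ) := by
      have h10 := Real.rpow_le_rpow (Real.rpow_nonneg hYpos.le _) h7
        (by positivity : (0:ℝ) ≤ 1/θ)
      rwa [← Real.rpow_mul hYpos.le,
        show θ/(θ+1) * (1/θ) = 1/(θ+1) by field_simp] at h10
    have h11 : C * R ^ (-q) * (K1/2 * Gaux g (v R) * R ^ (q + τ - 1)) ^ (1/(θ+1)) ≤ deriv v R := by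
      rw [hv' R hR0]
      exact mul_le_mul_of_nonneg_left h9 (by positivity)
    have h12 : (K1/2 * Gaux g (v R) * R ^ (q + τ - 1)) ^ (1/(θ+1)) =
        (K1/2) ^ (1/(θ+1)) * Gaux g (v R) ^ (1/(θ+1)) * R ^ ((q + τ - 1)/(θ+1)) := by
      rw [Real.mul_rpow (mul_nonneg (by linarith) hΦRpos.le) hRe.le,
        Real.mul_rpow (by linarith : (0:ℝ) ≤ K1/2) hΦRpos.le,
        ← Real.rpow_mul hR0.le, mul_one_div]
    have h13 : C * R ^ (-q) *
        ((K1/2) ^ (1/(θ+1)) * Gaux g (v R) ^ (1/(θ+1)) * R ^ ((q + τ - 1)/(θ+1))) =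
        C * (K1/2) ^ (1/(θ+1)) * R ^ (-q + (q + τ - 1)/(θ+1)) * Gaux g (v R) ^ (1/(θ+1)) := by
      rw [Real.rpow_add hR0]; ring
    have h14 : C * (K1/2) ^ (1/(θ+1)) * R ^ (-q + (q + τ - 1)/(θ+1)) *
        Gaux g (v R) ^ (1/(θ+1)) ≤ deriv v R := by
      rw [← h13, ← h12]; exact h11
    have hΦp : (0:ℝ) < Gaux g (v R) ^ (-(1/(θ+1))) := Real.rpow_pos_of_pos hΦRpos _
    have h15 := mul_le_mul_of_nonneg_right h14 hΦp.le
    rwa [mul_assoc, ← Real.rpow_add hΦRpos, add_neg_cancel, Real.rpow_zero, mul_one] at h15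
  -- the primitive of the KO integrand along v
  have hρ_contAt : ∀ u : ℝ, 0 < u → ContinuousAt (fun t => Gaux g t ^ (-(1/(θ+1)))) u :=
    fun u hu => ((hGder u).differentiableAt.continuousAt).rpow_const (Or.inl (hGpos u hu).ne')
  have hρ_cont : ContinuousOn (fun t => Gaux g t ^ (-(1/(θ+1)))) (Set.Ioi 0) :=
    fun u hu => (hρ_contAt u hu).continuousWithinAt
  have hρInt : ∀ x y : ℝ, 0 < x → 0 < y →
      IntervalIntegrable (fun t => Gaux g t ^ (-(1/(θ+1)))) volume x y := fun x y hx hy =>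
    (hρ_cont.mono (Set.ordConnected_Ioi.uIcc_subset hx hy)).intervalIntegrable
  have hvr1pos : 0 < v r1 := by
    by_contra hle
    push_neg at hle
    have h1 : Gaux g (v r1) ≤ Gaux g 0 :=
      (strictMono_of_hasDerivAt_pos hGder hg_pos).monotone hle
    have h2 : Gaux g 0 = 0 := intervalIntegral.integral_same
    have h3 := abs_nonneg (Gaux g (v 1))
    linarith
  have hΓder : ∀ R : ℝ, r1 ≤ R →
      HasDerivAt (fun s => ∫ u in (v r1)..(v s), Gaux g u ^ (-(1/(θ+1))))
        (Gaux g (v R) ^ (-(1/(θ+1))) * deriv v R) R := by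
    intro R hR
    have hR0 : (0:ℝ) < R := lt_of_lt_of_le hr10 hR
    have hvRpos : 0 < v R := lt_of_lt_of_le hvr1pos (hvle hr10.le hR)
    have hinner : HasDerivAt (fun y => ∫ u in (v r1)..y, Gaux g u ^ (-(1/(θ+1))))
        (Gaux g (v R) ^ (-(1/(θ+1)))) (v R) :=
      intervalIntegral.integral_hasDerivAt_right (hρInt _ _ hvr1pos hvRpos)
        (hρ_cont.stronglyMeasurableAtFilter isOpen_Ioi _ hvRpos)
        (hρ_contAt _ hvRpos)
    have := hinner.comp R (hvd' R hR0)
    simpa [Function.comp_def] using this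
  have hΓlb : ∀ R : ℝ, r1 ≤ R →
      (C * (K1/2) ^ (1/(θ+1)))/((-q + (q + τ - 1)/(θ+1)) + 1) *
        (R ^ ((-q + (q + τ - 1)/(θ+1)) + 1) - r1 ^ ((-q + (q + τ - 1)/(θ+1)) + 1)) ≤
      ∫ u in (v r1)..(v R), Gaux g u ^ (-(1/(θ+1))) := by
    intro R hR
    have h0 := le_of_hasDerivAt_nonneg (a := r1) (b := R)
      (f := fun s => (∫ u in (v r1)..(v s), Gaux g u ^ (-(1/(θ+1)))) -
        (C * (K1/2) ^ (1/(θ+1)))/((-q + (q + τ - 1)/(θ+1)) + 1) *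
          s ^ ((-q + (q + τ - 1)/(θ+1)) + 1))
      (f' := fun x => Gaux g (v x) ^ (-(1/(θ+1))) * deriv v x -
        (C * (K1/2) ^ (1/(θ+1)))/((-q + (q + τ - 1)/(θ+1)) + 1) *
          (((-q + (q + τ - 1)/(θ+1)) + 1) * x ^ ((-q + (q + τ - 1)/(θ+1)) + 1 - 1))) hR
      (fun x hx => by
        have hx0 : (0:ℝ) < x := lt_of_lt_of_le hr10 hx.1
        exact (hΓder x hx.1).sub
          ((Real.hasDerivAt_rpow_const (p := (-q + (q + τ - 1)/(θ+1)) + 1)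
            (Or.inl hx0.ne')).const_mul _))
      (fun x hx => by
        have hx0 : (0:ℝ) < x := lt_of_lt_of_le hr10 hx.1
        have h1 := hdvlb x hx.1
        have h2 : (C * (K1/2) ^ (1/(θ+1)))/((-q + (q + τ - 1)/(θ+1)) + 1) *
            (((-q + (q + τ - 1)/(θ+1)) + 1) * x ^ ((-q + (q + τ - 1)/(θ+1)) + 1 - 1)) =
            C * (K1/2) ^ (1/(θ+1)) * x ^ (-q + (q + τ - 1)/(θ+1)) := by
          rw [show (-q + (q + τ - 1)/(θ+1)) + 1 - 1 = -q + (q + τ - 1)/(θ+1) by ring]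
          rw [show (C * (K1/2) ^ (1/(θ+1)))/((-q + (q + τ - 1)/(θ+1)) + 1) *
              (((-q + (q + τ - 1)/(θ+1)) + 1) * x ^ (-q + (q + τ - 1)/(θ+1))) =
              C * (K1/2) ^ (1/(θ+1)) * x ^ (-q + (q + τ - 1)/(θ+1)) *
                ((((-q + (q + τ - 1)/(θ+1)) + 1))⁻¹ * (((-q + (q + τ - 1)/(θ+1)) + 1))) by ring]
          rw [inv_mul_cancel₀ hβpos.ne', mul_one]
        beta_reduce
        rw [h2, sub_nonneg]
        linarith [h1])
    simp only [intervalIntegral.integral_same] at h0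
    linarith
  -- conclusion
  intro b hb
  show (∫⁻ t in Set.Ioi b, ENNReal.ofReal ((Gaux g t) ^ (-(1/(θ+1))))) = ⊤
  by_contra hne
  set b2 : ℝ := max b (v r1) with hb2def
  have hb2pos : (0:ℝ) < b2 := lt_of_lt_of_le hb (le_max_left _ _)
  set I := ∫⁻ t in Set.Ioi b, ENNReal.ofReal (Gaux g t ^ (-(1/(θ+1)))) with hIdef
  set Γb2 : ℝ := ∫ u in (v r1)..b2, Gaux g u ^ (-(1/(θ+1))) with hΓb2
  have hT : Tendsto (fun R : ℝ => (C * (K1/2) ^ (1/(θ+1)))/((-q + (q + τ - 1)/(θ+1)) + 1) *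
      (R ^ ((-q + (q + τ - 1)/(θ+1)) + 1) - r1 ^ ((-q + (q + τ - 1)/(θ+1)) + 1))) atTop atTop := by
    have h1 := (tendsto_rpow_atTop hβpos).const_mul_atTop (div_pos hc3pos hβpos)
    have h2 := tendsto_atTop_add_const_right atTop
      (-((C * (K1/2) ^ (1/(θ+1)))/((-q + (q + τ - 1)/(θ+1)) + 1) *
        r1 ^ ((-q + (q + τ - 1)/(θ+1)) + 1))) h1
    exact h2.congr (fun R => by ring)
  obtain ⟨R, hRr1, hRb2, hRT⟩ := ((eventually_ge_atTop r1).and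
    ((hvtop.eventually_gt_atTop b2).and (hT.eventually_gt_atTop (I.toReal + Γb2)))).exists
  have hvRpos : (0:ℝ) < v R := lt_trans hb2pos hRb2
  have hIcc : Set.Icc b2 (v R) ⊆ Set.Ioi 0 := fun x hx => lt_of_lt_of_le hb2pos hx.1
  have hInt2 : IntegrableOn (fun t => Gaux g t ^ (-(1/(θ+1)))) (Set.Ioc b2 (v R)) :=
    ((hρ_cont.mono hIcc).integrableOn_Icc).mono_set Set.Ioc_subset_Icc_self
  have hnn : 0 ≤ᵐ[volume.restrict (Set.Ioc b2 (v R))] fun t => Gaux g t ^ (-(1/(θ+1))) := by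
    filter_upwards [MeasureTheory.ae_restrict_mem measurableSet_Ioc] with t ht
    exact Real.rpow_nonneg (hGpos t (lt_trans hb2pos ht.1)).le _
  have heq1 : ∫⁻ t in Set.Ioc b2 (v R), ENNReal.ofReal (Gaux g t ^ (-(1/(θ+1)))) =
      ENNReal.ofReal (∫ t in Set.Ioc b2 (v R), Gaux g t ^ (-(1/(θ+1)))) :=
    (MeasureTheory.ofReal_integral_eq_lintegral_ofReal hInt2 hnn).symm
  have hsub : Set.Ioc b2 (v R) ⊆ Set.Ioi b := fun x hx =>
    lt_of_le_of_lt (le_max_left b (v r1)) hx.1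
  have hle1 : ∫⁻ t in Set.Ioc b2 (v R), ENNReal.ofReal (Gaux g t ^ (-(1/(θ+1)))) ≤ I :=
    lintegral_mono_set hsub
  have heq2 : ∫ t in Set.Ioc b2 (v R), Gaux g t ^ (-(1/(θ+1))) =
      ∫ t in b2..(v R), Gaux g t ^ (-(1/(θ+1))) :=
    (intervalIntegral.integral_of_le hRb2.le).symm
  have hadd : Γb2 + (∫ t in b2..(v R), Gaux g t ^ (-(1/(θ+1)))) =
      ∫ t in (v r1)..(v R), Gaux g t ^ (-(1/(θ+1))) :=
    intervalIntegral.integral_add_adjacent_intervals (hρInt _ _ hvr1pos hb2pos)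
      (hρInt _ _ hb2pos hvRpos)
  have hΓR := hΓlb R hRr1
  have h16 : ENNReal.ofReal (∫ t in b2..(v R), Gaux g t ^ (-(1/(θ+1)))) ≤ I := by
    rw [← heq2, ← heq1]; exact hle1
  have h17 : (∫ t in b2..(v R), Gaux g t ^ (-(1/(θ+1)))) ≤ I.toReal :=
    (ENNReal.ofReal_le_iff_le_toReal hne).1 h16
  linarith
end

section
/- Let g : ℝ → ℝ be continuous, non-decreasing and everywhere positive, let C > 0, q ≥ 0, θ > 0 be constants, let p > 1, and assume τ = θ(q + 1/(p−1)). Let R ∈ (0,∞] and let v : [0,R) → ℝ solve the Cauchy problem (★) with v(0) = a. Then lim_{r→0⁺} (v'(r))^{p−1}/r = C^{p−1} · (g(a)/τ)^{(p−1)/θ}, and also the derivative of r ↦ (v'(r))^{p−1} tends to C^{p−1} · (g(a)/τ)^{(p−1)/θ} as r → 0⁺. -/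
open Real MeasureTheory Set Filter Topology ENNReal

/-- Lemma 2.2: if `τ = θ(q + 1/(p-1))` for some `p > 1`, then
`(v'(r))^{p-1}/r → C^{p-1} (g(a)/τ)^{(p-1)/θ}` as `r → 0⁺`, and the derivative of
`r ↦ (v'(r))^{p-1}` tends to the same limit as `r → 0⁺`. -/
theorem deriv_pow_asymptotics
    (g : ℝ → ℝ) (hg_cont : Continuous g) (hg_mono : Monotone g) (hg_pos : ∀ t, 0 < g t)
    (C q θ τ a : ℝ) (hC : 0 < C) (hq : 0 ≤ q) (hθ : 0 < θ)
    (p : ℝ) (hp : 1 < p) (hτ : τ = θ * (q + 1 / (p - 1)))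
    (R : ℝ≥0∞) (hR : 0 < R) (v : ℝ → ℝ)
    (hv : SolvesCauchy C q τ θ a g R v) :
    Tendsto (fun r => (deriv v r) ^ (p - 1) / r) (𝓝[>] 0)
      (𝓝 (C ^ (p - 1) * (g a / τ) ^ ((p - 1) / θ))) ∧
    Tendsto (fun r => deriv (fun x => (deriv v x) ^ (p - 1)) r) (𝓝[>] 0)
      (𝓝 (C ^ (p - 1) * (g a / τ) ^ ((p - 1) / θ))) := by
  obtain ⟨hvc, hv0, hvd⟩ := hv
  have hp1 : (0:ℝ) < p - 1 := by linarith
  have hτ0 : 0 < τ := by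
    have h1 : 0 < 1 / (p - 1) := by positivity
    have h2 : 0 < q + 1 / (p - 1) := by linarith
    rw [hτ]; positivity
  have hexp : τ * ((p - 1) / θ) = q * (p - 1) + 1 := by
    rw [hτ]; field_simp
  set S : Set ℝ := {r : ℝ | 0 ≤ r ∧ ENNReal.ofReal r < R} with hSdef
  have h0S : (0:ℝ) ∈ S := ⟨le_refl 0, by simpa using hR⟩
  obtain ⟨ε, hε0, hεR⟩ : ∃ ε : ℝ, 0 < ε ∧ ∀ r : ℝ, r < ε → ENNReal.ofReal r < R := by
    rcases eq_or_ne R ⊤ with h | h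
    · exact ⟨1, one_pos, fun r _ => h ▸ ENNReal.ofReal_lt_top⟩
    · refine ⟨R.toReal, ENNReal.toReal_pos hR.ne' h, fun r hr => ?_⟩
      rcases le_or_gt r 0 with h0 | h0
      · simpa [ENNReal.ofReal_eq_zero.2 h0] using hR
      · exact (ENNReal.ofReal_lt_iff_lt_toReal h0.le h).2 hr
  have hSsub : ∀ r : ℝ, r < ε → Icc 0 r ⊆ S := by
    intro r hr s hs
    exact ⟨hs.1, hεR s (lt_of_le_of_lt hs.2 hr)⟩
  set F : ℝ → ℝ := fun r => ∫ s in (0:ℝ)..r, s ^ (τ - 1) * g (v s) with hFdef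
  -- integrability of the integrand on [0, r] for r < ε
  have hInt : ∀ r : ℝ, 0 < r → r < ε →
      IntervalIntegrable (fun s => s ^ (τ - 1) * g (v s)) volume 0 r := by
    intro r hr0 hrε
    have hc : ContinuousOn (fun s => g (v s)) (Icc 0 r) :=
      hg_cont.comp_continuousOn (hvc.mono (hSsub r hrε))
    obtain ⟨M, hM⟩ := isCompact_Icc.exists_bound_of_continuousOn hc
    rw [intervalIntegrable_iff_integrableOn_Ioc_of_le hr0.le]
    have hmeas : AEStronglyMeasurable (fun s => s ^ (τ - 1) * g (v s))
        (volume.restrict (Ioc 0 r)) := by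
      refine ContinuousOn.aestronglyMeasurable ?_ measurableSet_Ioc
      intro s hs
      exact (Real.continuousAt_rpow_const s (τ - 1) (Or.inl hs.1.ne')).continuousWithinAt.mul
        ((hc s ⟨hs.1.le, hs.2⟩).mono Ioc_subset_Icc_self)
    refine Integrable.mono' (g := fun s => M * s ^ (τ - 1)) ?_ hmeas ?_
    · exact (intervalIntegrable_iff_integrableOn_Ioc_of_le hr0.le).1
        ((intervalIntegral.intervalIntegrable_rpow' (by linarith)).const_mul M)
    · filter_upwards [ae_restrict_mem measurableSet_Ioc] with s hs
      have h1 : (0:ℝ) ≤ s ^ (τ - 1) := Real.rpow_nonneg hs.1.le _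
      have h2 : ‖g (v s)‖ ≤ M := hM s ⟨hs.1.le, hs.2⟩
      calc ‖s ^ (τ - 1) * g (v s)‖ = s ^ (τ - 1) * ‖g (v s)‖ := by
            rw [norm_mul, Real.norm_eq_abs, abs_of_nonneg h1]
        _ ≤ s ^ (τ - 1) * M := mul_le_mul_of_nonneg_left h2 h1
        _ = M * s ^ (τ - 1) := mul_comm _ _
  -- continuity of g ∘ v at 0 within S
  have hgv0 : ContinuousWithinAt (fun s => g (v s)) S 0 :=
    hg_cont.continuousAt.comp_continuousWithinAt (hvc 0 h0S)
  -- main asymptotics of F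
  have hFlim : Tendsto (fun r => F r / r ^ τ) (𝓝[>] (0:ℝ)) (𝓝 (g a / τ)) := by
    rw [Metric.tendsto_nhdsWithin_nhds]
    intro ε' hε'
    have hδ'0 : 0 < ε' * τ / 2 := by positivity
    obtain ⟨δ, hδ0, hδ⟩ := Metric.continuousWithinAt_iff.1 hgv0 (ε' * τ / 2) hδ'0
    refine ⟨min δ ε, lt_min hδ0 hε0, ?_⟩
    intro r hr hrd
    have hr0 : 0 < r := hr
    have hrd' : r < min δ ε := by
      rwa [Real.dist_eq, sub_zero, abs_of_pos hr0] at hrd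
    have hrδ : r < δ := lt_of_lt_of_le hrd' (min_le_left _ _)
    have hrε : r < ε := lt_of_lt_of_le hrd' (min_le_right _ _)
    have hbound : ∀ s ∈ Icc (0:ℝ) r, |g (v s) - g a| ≤ ε' * τ / 2 := by
      intro s hs
      have hsS : s ∈ S := hSsub r hrε hs
      have hsd : dist s 0 < δ := by
        rw [Real.dist_eq, sub_zero, abs_of_nonneg hs.1]
        exact lt_of_le_of_lt hs.2 hrδ
      have h3 := hδ hsS hsd
      rw [Real.dist_eq, hv0] at h3
      exact h3.le
    have hint := hInt r hr0 hrε
    have hrpowInt : IntervalIntegrable (fun s : ℝ => s ^ (τ - 1)) volume 0 r :=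
      intervalIntegral.intervalIntegrable_rpow' (by linarith)
    have hrpow_val : (∫ s in (0:ℝ)..r, s ^ (τ - 1)) = r ^ τ / τ := by
      rw [integral_rpow (Or.inl (by linarith : (-1:ℝ) < τ - 1))]
      rw [sub_add_cancel, Real.zero_rpow hτ0.ne']
      ring
    have hupper : F r ≤ (g a + ε' * τ / 2) * (r ^ τ / τ) := by
      have h4 : F r ≤ ∫ s in (0:ℝ)..r, (g a + ε' * τ / 2) * s ^ (τ - 1) := by
        refine intervalIntegral.integral_mono_on hr0.le hint (hrpowInt.const_mul _) ?_
        intro s hs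
        have h1 : (0:ℝ) ≤ s ^ (τ - 1) := Real.rpow_nonneg hs.1 _
        have h2 : g (v s) ≤ g a + ε' * τ / 2 := by
          have := (abs_le.1 (hbound s hs)).2; linarith
        calc s ^ (τ - 1) * g (v s) ≤ s ^ (τ - 1) * (g a + ε' * τ / 2) :=
              mul_le_mul_of_nonneg_left h2 h1
          _ = (g a + ε' * τ / 2) * s ^ (τ - 1) := mul_comm _ _
      rwa [intervalIntegral.integral_const_mul, hrpow_val] at h4
    have hlower : (g a - ε' * τ / 2) * (r ^ τ / τ) ≤ F r := by
      have h4 : (∫ s in (0:ℝ)..r, (g a - ε' * τ / 2) * s ^ (τ - 1)) ≤ F r := by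
        refine intervalIntegral.integral_mono_on hr0.le (hrpowInt.const_mul _) hint ?_
        intro s hs
        have h1 : (0:ℝ) ≤ s ^ (τ - 1) := Real.rpow_nonneg hs.1 _
        have h2 : g a - ε' * τ / 2 ≤ g (v s) := by
          have := (abs_le.1 (hbound s hs)).1; linarith
        calc (g a - ε' * τ / 2) * s ^ (τ - 1) = s ^ (τ - 1) * (g a - ε' * τ / 2) :=
              mul_comm _ _
          _ ≤ s ^ (τ - 1) * g (v s) := mul_le_mul_of_nonneg_left h2 h1
      rwa [intervalIntegral.integral_const_mul, hrpow_val] at h4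
    have hrτ : 0 < r ^ τ := Real.rpow_pos_of_pos hr0 τ
    rw [Real.dist_eq]
    have hcan : ∀ b : ℝ, b * (r ^ τ / τ) * τ = b * r ^ τ := by
      intro b; rw [mul_assoc, div_mul_cancel₀ _ hτ0.ne']
    have hhalf : ε' * τ / 2 / τ = ε' / 2 := by
      field_simp
    have hub : F r / r ^ τ ≤ g a / τ + ε' / 2 := by
      have h6 : F r / r ^ τ ≤ (g a + ε' * τ / 2) / τ := by
        rw [div_le_div_iff₀ hrτ hτ0]
        calc F r * τ ≤ (g a + ε' * τ / 2) * (r ^ τ / τ) * τ :=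
              mul_le_mul_of_nonneg_right hupper hτ0.le
          _ = (g a + ε' * τ / 2) * r ^ τ := hcan _
      calc F r / r ^ τ ≤ (g a + ε' * τ / 2) / τ := h6
        _ = g a / τ + ε' / 2 := by rw [add_div, hhalf]
    have hlb : g a / τ - ε' / 2 ≤ F r / r ^ τ := by
      have h6 : (g a - ε' * τ / 2) / τ ≤ F r / r ^ τ := by
        rw [div_le_div_iff₀ hτ0 hrτ]
        calc (g a - ε' * τ / 2) * r ^ τ = (g a - ε' * τ / 2) * (r ^ τ / τ) * τ :=
              (hcan _).symm
          _ ≤ F r * τ := mul_le_mul_of_nonneg_right hlower hτ0.le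
      calc g a / τ - ε' / 2 = (g a - ε' * τ / 2) / τ := by rw [sub_div, hhalf]
        _ ≤ F r / r ^ τ := h6
    rw [abs_lt]; constructor <;> linarith
  have hM0 : 0 < g a / τ := div_pos (hg_pos a) hτ0
  have hFpos : ∀ᶠ r in 𝓝[>] (0:ℝ), 0 < F r := by
    have h1 : ∀ᶠ r in 𝓝[>] (0:ℝ), 0 < F r / r ^ τ :=
      hFlim.eventually (eventually_gt_nhds hM0)
    filter_upwards [h1, self_mem_nhdsWithin] with r h2 hr
    have hrτ : 0 < r ^ τ := Real.rpow_pos_of_pos hr τ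
    have h3 := mul_pos h2 hrτ
    rwa [div_mul_cancel₀ _ hrτ.ne'] at h3
  have hderiv_eq : ∀ᶠ r in 𝓝[>] (0:ℝ), deriv v r = C * r ^ (-q) * F r ^ (1 / θ) := by
    filter_upwards [Ioo_mem_nhdsGT_of_mem ⟨le_refl (0:ℝ), hε0⟩] with r hr
    exact (hvd r hr.1 (hεR r hr.2)).deriv
  -- algebraic identity for the power of the RHS
  have hpow : ∀ r : ℝ, 0 < r → 0 < F r →
      (C * r ^ (-q) * F r ^ (1 / θ)) ^ (p - 1)
        = C ^ (p - 1) * (r ^ (-(q * (p - 1))) * F r ^ ((p - 1) / θ)) := by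
    intro r hr0 hF0
    rw [Real.mul_rpow (by positivity) (Real.rpow_nonneg hF0.le _),
      Real.mul_rpow hC.le (Real.rpow_nonneg hr0.le _),
      ← Real.rpow_mul hr0.le, ← Real.rpow_mul hF0.le,
      show -q * (p - 1) = -(q * (p - 1)) by ring,
      show 1 / θ * (p - 1) = (p - 1) / θ by ring]
    ring
  have hdivpow : ∀ r : ℝ, 0 < r → 0 ≤ F r → ∀ b : ℝ,
      (F r / r ^ τ) ^ b = F r ^ b * r ^ (-(τ * b)) := by
    intro r hr0 hF0 b
    rw [Real.div_rpow hF0 (Real.rpow_nonneg hr0.le τ), ← Real.rpow_mul hr0.le,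
      Real.rpow_neg hr0.le, div_eq_mul_inv]
  -- Part 1
  have key1 : Tendsto (fun r => C ^ (p - 1) * (F r / r ^ τ) ^ ((p - 1) / θ)) (𝓝[>] (0:ℝ))
      (𝓝 (C ^ (p - 1) * (g a / τ) ^ ((p - 1) / θ))) :=
    (((Real.continuousAt_rpow_const _ _ (Or.inl hM0.ne')).tendsto).comp hFlim).const_mul _
  have part1 : Tendsto (fun r => (deriv v r) ^ (p - 1) / r) (𝓝[>] (0:ℝ))
      (𝓝 (C ^ (p - 1) * (g a / τ) ^ ((p - 1) / θ))) := by
    refine key1.congr' ?_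
    filter_upwards [hderiv_eq, hFpos, self_mem_nhdsWithin] with r h1 h2 hr
    have hr0 : (0:ℝ) < r := hr
    rw [h1, hpow r hr0 h2, hdivpow r hr0 h2.le ((p - 1) / θ)]
    have he : r ^ (-(q * (p - 1))) = r ^ (-(τ * ((p - 1) / θ))) * r := by
      rw [show r ^ (-(τ * ((p - 1) / θ))) * r
          = r ^ (-(τ * ((p - 1) / θ))) * r ^ (1:ℝ) by rw [Real.rpow_one],
        ← Real.rpow_add hr0]
      congr 1; linarith [hexp]
    rw [he]
    field_simp
  refine ⟨part1, ?_⟩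
  -- Part 2
  obtain ⟨m, hm0, hm⟩ := (nhdsGT_basis (0:ℝ)).eventually_iff.1
    (hFpos.and (Ioo_mem_nhdsGT_of_mem ⟨le_refl (0:ℝ), hε0⟩ :
      ∀ᶠ r in 𝓝[>] (0:ℝ), r ∈ Ioo 0 ε))
  have hVCA : ∀ x ∈ Ioo (0:ℝ) m, ContinuousAt v x := fun x hx =>
    (hvd x hx.1 (hεR x (hm hx).2.2)).continuousAt
  have hfCA : ∀ x ∈ Ioo (0:ℝ) m, ContinuousAt (fun s => s ^ (τ - 1) * g (v s)) x :=
    fun x hx =>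
      (Real.continuousAt_rpow_const x (τ - 1) (Or.inl hx.1.ne')).mul
        (hg_cont.continuousAt.comp (hVCA x hx))
  have hfCO : ContinuousOn (fun s => s ^ (τ - 1) * g (v s)) (Ioo (0:ℝ) m) :=
    fun x hx => (hfCA x hx).continuousWithinAt
  have hΦeq : ∀ᶠ r in 𝓝[>] (0:ℝ),
      deriv (fun x => (deriv v x) ^ (p - 1)) r
        = C ^ (p - 1) * ((-(q * (p - 1))) * r ^ (-(q * (p - 1)) - 1) * F r ^ ((p - 1) / θ)
            + r ^ (-(q * (p - 1))) *
              (r ^ (τ - 1) * g (v r) * ((p - 1) / θ) * F r ^ ((p - 1) / θ - 1))) := by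
    filter_upwards [Ioo_mem_nhdsGT_of_mem ⟨le_refl (0:ℝ), hm0⟩] with r hr
    have hr0 : 0 < r := hr.1
    have hF0 : 0 < F r := (hm hr).1
    have hrε : r < ε := (hm hr).2.2
    have hFd : HasDerivAt F (r ^ (τ - 1) * g (v r)) r :=
      intervalIntegral.integral_hasDerivAt_right (hInt r hr0 hrε)
        (ContinuousOn.stronglyMeasurableAtFilter isOpen_Ioo hfCO r hr) (hfCA r hr)
    have h3 : HasDerivAt (fun x : ℝ => x ^ (-(q * (p - 1))))
        ((-(q * (p - 1))) * r ^ (-(q * (p - 1)) - 1)) r :=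
      Real.hasDerivAt_rpow_const (Or.inl hr0.ne')
    have h4 : HasDerivAt (fun x => F x ^ ((p - 1) / θ))
        (r ^ (τ - 1) * g (v r) * ((p - 1) / θ) * F r ^ ((p - 1) / θ - 1)) r :=
      hFd.rpow_const (Or.inl hF0.ne')
    have h5 := (h3.mul h4).const_mul (C ^ (p - 1))
    have heq : (fun x => (deriv v x) ^ (p - 1))
        =ᶠ[𝓝 r] fun x => C ^ (p - 1) * (x ^ (-(q * (p - 1))) * F x ^ ((p - 1) / θ)) := by
      filter_upwards [isOpen_Ioo.mem_nhds hr] with x hx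
      rw [(hvd x hx.1 (hεR x (hm hx).2.2)).deriv]
      exact hpow x hx.1 (hm hx).1
    rw [heq.deriv_eq]; exact h5.deriv
  -- the limit of the explicit derivative formula
  have hgvlim : Tendsto (fun r => g (v r)) (𝓝[>] (0:ℝ)) (𝓝 (g a)) := by
    have h1 : Tendsto (fun s => g (v s)) (𝓝[S] (0:ℝ)) (𝓝 (g (v 0))) := hgv0
    rw [hv0] at h1
    rw [← nhdsWithin_Ioo_eq_nhdsGT hε0]
    exact h1.mono_left (nhdsWithin_mono 0 fun x hx => ⟨hx.1.le, hεR x hx.2⟩)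
  have hga : g a ≠ 0 := (hg_pos a).ne'
  have hval : C ^ (p - 1) * ((-(q * (p - 1))) * (g a / τ) ^ ((p - 1) / θ)
      + (p - 1) / θ * g a * (g a / τ) ^ ((p - 1) / θ - 1))
      = C ^ (p - 1) * (g a / τ) ^ ((p - 1) / θ) := by
    have hsub : (g a / τ) ^ ((p - 1) / θ - 1)
        = (g a / τ) ^ ((p - 1) / θ) * (τ / g a) := by
      rw [Real.rpow_sub_one hM0.ne', div_eq_mul_inv, inv_div]
    rw [hsub]
    have h9 : (p - 1) / θ * g a * ((g a / τ) ^ ((p - 1) / θ) * (τ / g a))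
        = ((p - 1) / θ * τ) * (g a / τ) ^ ((p - 1) / θ) := by
      generalize (g a / τ) ^ ((p - 1) / θ) = A
      field_simp
    rw [h9]
    have h10 : -(q * (p - 1)) + (p - 1) / θ * τ = 1 := by
      have hc : τ * ((p - 1) / θ) = (p - 1) / θ * τ := mul_comm _ _
      linarith [hexp, hc]
    calc C ^ (p - 1) * ((-(q * (p - 1))) * (g a / τ) ^ ((p - 1) / θ)
          + (p - 1) / θ * τ * (g a / τ) ^ ((p - 1) / θ))
        = C ^ (p - 1) * ((-(q * (p - 1)) + (p - 1) / θ * τ) * (g a / τ) ^ ((p - 1) / θ)) := by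
          ring
      _ = C ^ (p - 1) * (g a / τ) ^ ((p - 1) / θ) := by rw [h10]; ring
  have key2 : Tendsto (fun r => C ^ (p - 1) * ((-(q * (p - 1))) * (F r / r ^ τ) ^ ((p - 1) / θ)
      + (p - 1) / θ * g (v r) * (F r / r ^ τ) ^ ((p - 1) / θ - 1))) (𝓝[>] (0:ℝ))
      (𝓝 (C ^ (p - 1) * (g a / τ) ^ ((p - 1) / θ))) := by
    have t1 : Tendsto (fun r => (F r / r ^ τ) ^ ((p - 1) / θ)) (𝓝[>] (0:ℝ))
        (𝓝 ((g a / τ) ^ ((p - 1) / θ))) :=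
      ((Real.continuousAt_rpow_const _ _ (Or.inl hM0.ne')).tendsto).comp hFlim
    have t2 : Tendsto (fun r => (F r / r ^ τ) ^ ((p - 1) / θ - 1)) (𝓝[>] (0:ℝ))
        (𝓝 ((g a / τ) ^ ((p - 1) / θ - 1))) :=
      ((Real.continuousAt_rpow_const _ _ (Or.inl hM0.ne')).tendsto).comp hFlim
    have t3 := (((t1.const_mul (-(q * (p - 1)))).add
      ((hgvlim.const_mul ((p - 1) / θ)).mul t2)).const_mul (C ^ (p - 1)))
    rw [← hval]
    exact t3
  refine key2.congr' ?_
  filter_upwards [hΦeq, Ioo_mem_nhdsGT_of_mem ⟨le_refl (0:ℝ), hm0⟩] with r h1 hr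
  have hr0 : 0 < r := hr.1
  have hF0 : 0 < F r := (hm hr).1
  rw [h1, hdivpow r hr0 hF0.le ((p - 1) / θ), hdivpow r hr0 hF0.le ((p - 1) / θ - 1)]
  have e2 : r ^ (-(τ * ((p - 1) / θ))) = r ^ (-(q * (p - 1)) - 1) := by
    congr 1; linarith [hexp]
  have e3 : r ^ (-(τ * ((p - 1) / θ - 1))) = r ^ (-(q * (p - 1))) * r ^ (τ - 1) := by
    rw [← Real.rpow_add hr0]
    congr 1
    have hx : τ * ((p - 1) / θ - 1) = τ * ((p - 1) / θ) - τ := by ring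
    linarith [hexp, hx]
  rw [e2, e3]
  ring
end

section
/- Let g : ℝ → ℝ be continuous, non-decreasing and everywhere positive, let C > 0, q ≥ 0, θ > 0, τ > θq be constants, let R ∈ (0,∞], and let v : [0,R) → ℝ solve the Cauchy problem (★). Then for every r ∈ (0,R), v'(r) > 0, v''(r) exists, and v satisfies the ordinary differential equation v''(r) · (v'(r))^{θ−1} + (q/r) · (v'(r))^{θ} = (C^θ/θ) · r^{τ − qθ − 1} · g(v(r)). -/
open Real MeasureTheory Set Filter Topology ENNReal

/-- Algebraic identity used in the proof of (3.1). -/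
lemma cauchy_ode_algebra (C q θ τ A G r : ℝ) (hC : 0 < C) (hr : 0 < r) (hA : 0 < A)
    (hθ : 0 < θ) :
    (C * (-q * r ^ (-q - 1)) * A ^ (1 / θ) +
        C * r ^ (-q) * ((r ^ (τ - 1) * G) * (1 / θ) * A ^ (1 / θ - 1))) *
      (C * r ^ (-q) * A ^ (1 / θ)) ^ (θ - 1) +
      q / r * (C * r ^ (-q) * A ^ (1 / θ)) ^ θ =
      C ^ θ / θ * r ^ (τ - q * θ - 1) * G := by
  have hrq : (0:ℝ) < r ^ (-q) := Real.rpow_pos_of_pos hr _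
  have hB : (0:ℝ) < A ^ (1 / θ) := Real.rpow_pos_of_pos hA _
  have h1 : (C * r ^ (-q) * A ^ (1 / θ)) ^ (θ - 1)
      = C ^ (θ - 1) * r ^ (-q * (θ - 1)) * A ^ (1 / θ * (θ - 1)) := by
    rw [Real.mul_rpow (by positivity) hB.le, Real.mul_rpow hC.le hrq.le,
      ← Real.rpow_mul hr.le, ← Real.rpow_mul hA.le]
  have h2 : (C * r ^ (-q) * A ^ (1 / θ)) ^ θ
      = C ^ θ * r ^ (-q * θ) * A := by
    rw [Real.mul_rpow (by positivity) hB.le, Real.mul_rpow hC.le hrq.le,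
      ← Real.rpow_mul hr.le, ← Real.rpow_mul hA.le]
    rw [show 1 / θ * θ = 1 by field_simp, Real.rpow_one]
  have hCC : C * C ^ (θ - 1) = C ^ θ := by
    nth_rewrite 1 [← Real.rpow_one C]
    rw [← Real.rpow_add hC]; congr 1; ring
  have hr1 : r ^ (-q - 1) * r ^ (-q * (θ - 1)) = r ^ (-(q * θ) - 1) := by
    rw [← Real.rpow_add hr]; congr 1; ring
  have hr2 : r ^ (-q) * r ^ (τ - 1) * r ^ (-q * (θ - 1)) = r ^ (τ - q * θ - 1) := by
    rw [← Real.rpow_add hr, ← Real.rpow_add hr]; congr 1; ring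
  have hA1 : A ^ (1 / θ) * A ^ (1 / θ * (θ - 1)) = A := by
    rw [← Real.rpow_add hA, show 1 / θ + 1 / θ * (θ - 1) = 1 by field_simp; ring,
      Real.rpow_one]
  have hA2 : A ^ (1 / θ - 1) * A ^ (1 / θ * (θ - 1)) = 1 := by
    rw [← Real.rpow_add hA, show 1 / θ - 1 + 1 / θ * (θ - 1) = 0 by field_simp; ring,
      Real.rpow_zero]
  have hr3 : r ^ (-(q * θ) - 1) = r ^ (-q * θ) / r := by
    rw [show -(q * θ) - 1 = -q * θ - 1 by ring, Real.rpow_sub hr, Real.rpow_one]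
  rw [h1, h2]
  calc (C * (-q * r ^ (-q - 1)) * A ^ (1 / θ) +
        C * r ^ (-q) * ((r ^ (τ - 1) * G) * (1 / θ) * A ^ (1 / θ - 1))) *
      (C ^ (θ - 1) * r ^ (-q * (θ - 1)) * A ^ (1 / θ * (θ - 1))) +
      q / r * (C ^ θ * r ^ (-q * θ) * A)
      = (C * C ^ (θ - 1)) * (-q) * ((r ^ (-q - 1) * r ^ (-q * (θ - 1))) *
          (A ^ (1 / θ) * A ^ (1 / θ * (θ - 1)))) +
        (C * C ^ (θ - 1)) * (1 / θ) *
          ((r ^ (-q) * r ^ (τ - 1) * r ^ (-q * (θ - 1))) *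
            ((A ^ (1 / θ - 1) * A ^ (1 / θ * (θ - 1))) * G)) +
        q * (r ^ (-q * θ) / r) * (C ^ θ * A) := by ring
    _ = C ^ θ * (-q) * (r ^ (-(q * θ) - 1) * A) +
        C ^ θ * (1 / θ) * (r ^ (τ - q * θ - 1) * (1 * G)) +
        q * r ^ (-(q * θ) - 1) * (C ^ θ * A) := by
          rw [hCC, hr1, hr2, hA1, hA2, ← hr3]
    _ = C ^ θ / θ * r ^ (τ - q * θ - 1) * G := by ring

/-- Identity (3.1): every solution of (★) with `τ > θq` satisfies `v'(r) > 0` and the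
ODE `v''(r)(v'(r))^{θ-1} + (q/r)(v'(r))^θ = (C^θ/θ) r^{τ-qθ-1} g(v(r))` on `(0, R)`. -/
theorem solution_satisfies_ODE
    (g : ℝ → ℝ) (hg_cont : Continuous g) (hg_mono : Monotone g) (hg_pos : ∀ t, 0 < g t)
    (C q θ τ a : ℝ) (hC : 0 < C) (hq : 0 ≤ q) (hθ : 0 < θ) (hτ : θ * q < τ)
    (R : ℝ≥0∞) (v : ℝ → ℝ)
    (hv : SolvesCauchy C q τ θ a g R v) :
    ∀ r : ℝ, 0 < r → ENNReal.ofReal r < R →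
      0 < deriv v r ∧ DifferentiableAt ℝ (deriv v) r ∧
      deriv (deriv v) r * (deriv v r) ^ (θ - 1) + q / r * (deriv v r) ^ θ =
        C ^ θ / θ * r ^ (τ - q * θ - 1) * g (v r) := by
  intro r hr hrR
  have hτ0 : 0 < τ := lt_of_le_of_lt (mul_nonneg hθ.le hq) hτ
  -- the open set on which everything happens
  set S : Set ℝ := {x : ℝ | 0 < x ∧ ENNReal.ofReal x < R} with hS_def
  have hS_open : IsOpen S := by
    have : S = Ioi (0:ℝ) ∩ ENNReal.ofReal ⁻¹' (Iio R) := rfl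
    rw [this]
    exact isOpen_Ioi.inter (isOpen_Iio.preimage ENNReal.continuous_ofReal)
  have hrS : r ∈ S := ⟨hr, hrR⟩
  have hST : S ⊆ {x : ℝ | 0 ≤ x ∧ ENNReal.ofReal x < R} := fun x hx => ⟨hx.1.le, hx.2⟩
  -- the integrand
  set f : ℝ → ℝ := fun s => s ^ (τ - 1) * g (v s) with hf_def
  set F : ℝ → ℝ := fun x => ∫ s in (0:ℝ)..x, f s with hF_def
  -- interval integrability on [0, x] for x ∈ S
  have hInt : ∀ x ∈ S, IntervalIntegrable f volume 0 x := by
    intro x hx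
    have h1 : IntervalIntegrable (fun s : ℝ => s ^ (τ - 1)) volume 0 x :=
      intervalIntegral.intervalIntegrable_rpow' (by linarith)
    have h2 : ContinuousOn (fun s => g (v s)) (Set.uIcc (0:ℝ) x) := by
      apply hg_cont.comp_continuousOn
      apply hv.1.mono
      intro s hs
      rw [Set.uIcc_of_le hx.1.le] at hs
      exact ⟨hs.1, lt_of_le_of_lt (ENNReal.ofReal_le_ofReal hs.2) hx.2⟩
    exact h1.mul_continuousOn h2
  -- continuity of f on S
  have hf_cont : ContinuousOn f S := by
    intro x hx
    apply ContinuousWithinAt.mul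
    · exact (Real.continuousAt_rpow_const x (τ - 1) (Or.inl hx.1.ne')).continuousWithinAt
    · exact (hg_cont.continuousAt.comp_continuousWithinAt ((hv.1.mono hST) x hx))
  -- positivity of F on S
  have hFpos : ∀ x ∈ S, 0 < F x := by
    intro x hx
    apply intervalIntegral.intervalIntegral_pos_of_pos_on (hInt x hx)
    · intro s hs
      exact mul_pos (Real.rpow_pos_of_pos hs.1 _) (hg_pos _)
    · exact hx.1
  -- derivative of F at r
  have hF' : HasDerivAt F (f r) r :=
    intervalIntegral.integral_hasDerivAt_right (hInt r hrS)
      (hf_cont.stronglyMeasurableAtFilter hS_open r hrS)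
      ((hf_cont r hrS).continuousAt (hS_open.mem_nhds hrS))
  -- the smooth representative of deriv v
  set w : ℝ → ℝ := fun x => C * x ^ (-q) * (F x) ^ (1 / θ) with hw_def
  have hdv_eq : ∀ x ∈ S, deriv v x = w x := by
    intro x hx
    exact (hv.2.2 x hx.1 hx.2).deriv
  have hdv_ev : deriv v =ᶠ[𝓝 r] w :=
    Filter.eventuallyEq_of_mem (hS_open.mem_nhds hrS) hdv_eq
  have hFr : 0 < F r := hFpos r hrS
  -- derivative of w at r
  have hw1 : HasDerivAt (fun x : ℝ => C * x ^ (-q)) (C * (-q * r ^ (-q - 1))) r :=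
    (Real.hasDerivAt_rpow_const (Or.inl hr.ne')).const_mul C
  have hw2 : HasDerivAt (fun x => (F x) ^ (1 / θ))
      (f r * (1 / θ) * F r ^ (1 / θ - 1)) r :=
    hF'.rpow_const (Or.inl hFr.ne')
  have hw : HasDerivAt w
      (C * (-q * r ^ (-q - 1)) * F r ^ (1 / θ) +
        C * r ^ (-q) * (f r * (1 / θ) * F r ^ (1 / θ - 1))) r := hw1.mul hw2
  have hdv2 : HasDerivAt (deriv v)
      (C * (-q * r ^ (-q - 1)) * F r ^ (1 / θ) +
        C * r ^ (-q) * (f r * (1 / θ) * F r ^ (1 / θ - 1))) r :=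
    hw.congr_of_eventuallyEq hdv_ev
  have hdvr : deriv v r = C * r ^ (-q) * (F r) ^ (1 / θ) := hdv_eq r hrS
  refine ⟨?_, hdv2.differentiableAt, ?_⟩
  · rw [hdvr]; positivity
  · rw [hdv2.deriv, hdvr, hf_def]
    exact cauchy_ode_algebra C q θ τ (F r) (g (v r)) r hC hr hFr hθ
end

section
/- Let θ > 0 and let g : ℝ → ℝ be non-decreasing, everywhere positive, and continuous. If ∫_b^∞ (∫_0^t g(s) ds)^{-1/(θ+1)} dt < ∞ for some b > 0, then: (i) t · (∫_0^t g(s) ds)^{-1/(θ+1)} → 0 as t → +∞; and (ii) g(t)/t^θ → +∞ as t → +∞. In particular, for every constant a ∈ ℝ there exists t₁ > max{a,0} such that g(t)^{1/θ} > t − a for all t > t₁. -/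
open Real MeasureTheory Set Filter Topology ENNReal

private lemma tail_measure_tendsto (ν : MeasureTheory.Measure ℝ) (hν : ν Set.univ ≠ ⊤) :
    Tendsto (fun t => ν (Set.Ioi t)) atTop (𝓝 0) := by
  have h := ENNReal.Tendsto.sub (tendsto_const_nhds (x := ν Set.univ))
    (MeasureTheory.tendsto_measure_Iic_atTop ν) (Or.inl hν)
  rw [tsub_self] at h
  refine h.congr fun t => ?_
  rw [← Set.compl_Iic, measure_compl measurableSet_Iic
    (ne_top_of_le_ne_top hν (measure_mono (Set.subset_univ _)))]

private lemma aux_tendsto_zero {b : ℝ} (hb : 0 < b) {F : ℝ → ℝ}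
    (hFmeas : Measurable F) (hFanti : ∀ s t : ℝ, b ≤ s → s ≤ t → F t ≤ F s)
    (hFnn : ∀ t : ℝ, 0 < t → 0 ≤ F t)
    (hK : ∫⁻ t in Set.Ioi b, ENNReal.ofReal (F t) < ⊤) :
    Tendsto (fun t => t * F t) atTop (𝓝 0) := by
  set ν : Measure ℝ :=
    (volume.restrict (Set.Ioi b)).withDensity (fun t => ENNReal.ofReal (F t)) with hν
  have hνfin : ν Set.univ ≠ ⊤ := by
    rw [hν, withDensity_apply _ MeasurableSet.univ, Measure.restrict_univ]
    exact hK.ne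
  have tail := tail_measure_tendsto ν hνfin
  have key : ∀ t : ℝ, 2 * b < t → ENNReal.ofReal (t / 2 * F t) ≤ ν (Set.Ioi (t / 2)) := by
    intro t ht
    have hbt : b < t / 2 := by linarith
    have h0t : 0 < t := by linarith
    have e1 : ν (Set.Ioi (t / 2)) = ∫⁻ x in Set.Ioi (t / 2), ENNReal.ofReal (F x) := by
      rw [hν, withDensity_apply _ measurableSet_Ioi,
        Measure.restrict_restrict measurableSet_Ioi,
        Set.inter_eq_left.2 (Set.Ioi_subset_Ioi hbt.le)]
    rw [e1]
    calc ENNReal.ofReal (t / 2 * F t)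
        = ENNReal.ofReal (F t) * volume (Set.Ioc (t / 2) t) := by
          rw [Real.volume_Ioc, ← ENNReal.ofReal_mul (hFnn t h0t)]
          rw [mul_comm (t / 2)]
          congr 1
          ring
      _ = ∫⁻ _ in Set.Ioc (t / 2) t, ENNReal.ofReal (F t) :=
          (MeasureTheory.setLIntegral_const _ _).symm
      _ ≤ ∫⁻ x in Set.Ioc (t / 2) t, ENNReal.ofReal (F x) :=
          MeasureTheory.setLIntegral_mono hFmeas.ennreal_ofReal fun x hx =>
            ENNReal.ofReal_le_ofReal (hFanti x t (hbt.le.trans hx.1.le) hx.2)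
      _ ≤ ∫⁻ x in Set.Ioi (t / 2), ENNReal.ofReal (F x) :=
          MeasureTheory.lintegral_mono_set Set.Ioc_subset_Ioi_self
  have hup : Tendsto (fun t : ℝ => ν (Set.Ioi (t / 2))) atTop (𝓝 0) :=
    tail.comp (Tendsto.atTop_div_const two_pos tendsto_id)
  have hof : Tendsto (fun t => ENNReal.ofReal (t / 2 * F t)) atTop (𝓝 0) := by
    refine tendsto_of_tendsto_of_tendsto_of_le_of_le' tendsto_const_nhds hup ?_ ?_
    · exact Eventually.of_forall fun t => zero_le
    · exact (eventually_gt_atTop (2 * b)).mono fun t ht => key t ht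
  have hhalf : Tendsto (fun t => t / 2 * F t) atTop (𝓝 0) := by
    have h2 := (ENNReal.tendsto_toReal (by simp : (0 : ℝ≥0∞) ≠ ⊤)).comp hof
    simp only [Function.comp_def, ENNReal.toReal_zero] at h2
    refine h2.congr' ?_
    filter_upwards [eventually_gt_atTop (0 : ℝ)] with t ht
    exact ENNReal.toReal_ofReal (mul_nonneg (by linarith) (hFnn t ht))
  have h3 := hhalf.const_mul (2 : ℝ)
  rw [mul_zero] at h3
  refine h3.congr fun t => ?_
  ring

/-- Asymptotic claims in the proof of Lemma 3.1: if the Keller–Osserman integral is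
finite for some `b > 0`, then `t (∫_0^t g)^{-1/(θ+1)} → 0` and `g(t)/t^θ → +∞` as
`t → +∞`; in particular for every `a` there is `t₁ > max{a, 0}` with
`g(t)^{1/θ} > t - a` for all `t > t₁`. -/
theorem asymptotics_of_KO_failure
    (θ : ℝ) (hθ : 0 < θ)
    (g : ℝ → ℝ) (hg_cont : Continuous g) (hg_mono : Monotone g) (hg_pos : ∀ t, 0 < g t)
    (hKOfail : ∃ b : ℝ, 0 < b ∧
      ∫⁻ t in Set.Ioi b,
        ENNReal.ofReal ((∫ s in (0:ℝ)..t, g s) ^ (-(1 / (θ + 1)))) < ⊤) :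
    Tendsto (fun t => t * (∫ s in (0:ℝ)..t, g s) ^ (-(1 / (θ + 1)))) atTop (𝓝 0) ∧
    Tendsto (fun t => g t / t ^ θ) atTop atTop ∧
    ∀ a : ℝ, ∃ t₁ : ℝ, max a 0 < t₁ ∧ ∀ t : ℝ, t₁ < t → t - a < g t ^ (1 / θ) := by
  obtain ⟨b, hb, hK⟩ := hKOfail
  have hθ1 : (0:ℝ) < θ + 1 := by linarith
  set G : ℝ → ℝ := fun t => ∫ s in (0:ℝ)..t, g s with hGdef
  have hGcont : Continuous G :=
    intervalIntegral.continuous_primitive (fun a b => hg_cont.intervalIntegrable a b) 0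
  have hGlt : ∀ s t : ℝ, s < t → G s < G t := by
    intro s t hst
    have h1 : G t - G s = ∫ x in s..t, g x :=
      intervalIntegral.integral_interval_sub_left (hg_cont.intervalIntegrable 0 t)
        (hg_cont.intervalIntegrable 0 s)
    have h2 : 0 < ∫ x in s..t, g x :=
      intervalIntegral.intervalIntegral_pos_of_pos (hg_cont.intervalIntegrable s t) hg_pos hst
    linarith
  have hG0 : G 0 = 0 := intervalIntegral.integral_same
  have hGpos : ∀ t : ℝ, 0 < t → 0 < G t := fun t ht => hG0 ▸ hGlt 0 t ht
  set F : ℝ → ℝ := fun t => G t ^ (-(1 / (θ + 1))) with hFdef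
  have hFmeas : Measurable F := hGcont.measurable.pow measurable_const
  have hFpos : ∀ t : ℝ, 0 < t → 0 < F t := fun t ht => Real.rpow_pos_of_pos (hGpos t ht) _
  have hFanti : ∀ s t : ℝ, b ≤ s → s ≤ t → F t ≤ F s := by
    intro s t hs hst
    have hGle : G s ≤ G t := by
      rcases eq_or_lt_of_le hst with rfl | h
      · exact le_rfl
      · exact (hGlt s t h).le
    exact Real.rpow_le_rpow_of_nonpos (hGpos s (hb.trans_le hs)) hGle
      (neg_nonpos.2 (by positivity))
  have hFnn : ∀ t : ℝ, 0 < t → 0 ≤ F t := fun t ht => (hFpos t ht).le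
  have part1 : Tendsto (fun t => t * F t) atTop (𝓝 0) :=
    aux_tendsto_zero hb hFmeas hFanti hFnn hK
  -- Part (ii)
  have hmem : ∀ᶠ t in atTop, t * F t ∈ Set.Ioi (0:ℝ) :=
    (eventually_gt_atTop (0:ℝ)).mono fun t ht => mul_pos ht (hFpos t ht)
  have hinv : Tendsto (fun t => (t * F t)⁻¹) atTop atTop :=
    Filter.Tendsto.inv_tendsto_nhdsGT_zero (tendsto_nhdsWithin_iff.2 ⟨part1, hmem⟩)
  have hpow : Tendsto (fun t => ((t * F t)⁻¹) ^ (θ + 1)) atTop atTop :=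
    (tendsto_rpow_atTop hθ1).comp hinv
  have heq : ∀ᶠ t in atTop, ((t * F t)⁻¹) ^ (θ + 1) = G t / t ^ (θ + 1) := by
    filter_upwards [eventually_gt_atTop (0:ℝ)] with t ht
    have hGt : 0 < G t := hGpos t ht
    have e1 : (t * F t)⁻¹ = t⁻¹ * G t ^ (1 / (θ + 1)) := by
      rw [mul_inv, hFdef]
      simp only
      rw [Real.rpow_neg hGt.le, inv_inv]
    rw [e1, Real.mul_rpow (inv_nonneg.2 ht.le) (Real.rpow_nonneg hGt.le _),
      Real.inv_rpow ht.le, ← Real.rpow_mul hGt.le,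
      one_div_mul_cancel hθ1.ne', Real.rpow_one, inv_mul_eq_div]
  have part2' : Tendsto (fun t => G t / t ^ (θ + 1)) atTop atTop := hpow.congr' heq
  have hle : ∀ᶠ t in atTop, G t / t ^ (θ + 1) ≤ g t / t ^ θ := by
    filter_upwards [eventually_gt_atTop (0:ℝ)] with t ht
    have hGle : G t ≤ t * g t := by
      have h1 : (∫ s in (0:ℝ)..t, g s) ≤ ∫ _ in (0:ℝ)..t, g t :=
        intervalIntegral.integral_mono_on ht.le (hg_cont.intervalIntegrable 0 t)
          intervalIntegrable_const (fun x hx => hg_mono hx.2)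
      simpa using h1
    have htθ : (0:ℝ) < t ^ θ := Real.rpow_pos_of_pos ht θ
    rw [show θ + 1 = θ + 1 from rfl, Real.rpow_add ht θ 1, Real.rpow_one]
    rw [div_le_div_iff₀ (by positivity) htθ]
    calc G t * t ^ θ ≤ (t * g t) * t ^ θ := by nlinarith
      _ = g t * (t ^ θ * t) := by ring
  have part2 : Tendsto (fun t => g t / t ^ θ) atTop atTop :=
    tendsto_atTop_mono' atTop hle part2'
  refine ⟨part1, part2, ?_⟩
  -- Part (iii)
  intro a
  obtain ⟨T, hT⟩ := eventually_atTop.1 (part2.eventually_ge_atTop ((2:ℝ) ^ θ))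
  refine ⟨max (max a 0) (max T (-a)) + 1, ?_, ?_⟩
  · have h1 : max a 0 ≤ max (max a 0) (max T (-a)) := le_max_left _ _
    linarith
  · intro t ht
    have h0 : 0 < t := by
      have h1 := le_max_right a 0
      have h2 := le_max_left (max a 0) (max T (-a))
      linarith
    have hTt : T ≤ t := by
      have h1 := le_max_left T (-a)
      have h2 := le_max_right (max a 0) (max T (-a))
      linarith
    have hat : -a < t := by
      have h1 := le_max_right T (-a)
      have h2 := le_max_right (max a 0) (max T (-a))
      linarith
    have htθ : (0:ℝ) < t ^ θ := Real.rpow_pos_of_pos h0 θ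
    have h2 : (2:ℝ) ^ θ * t ^ θ ≤ g t := by
      have h3 := hT t hTt
      rw [le_div_iff₀ htθ] at h3
      linarith
    have h4 : ((2 * t : ℝ)) ^ θ ≤ g t := by
      rw [Real.mul_rpow (by norm_num) h0.le]; exact h2
    have h5 : (2 * t : ℝ) ≤ g t ^ (1 / θ) := by
      have h6 := Real.rpow_le_rpow (Real.rpow_nonneg (by positivity) θ) h4
        (by positivity : (0:ℝ) ≤ 1 / θ)
      rwa [← Real.rpow_mul (by positivity : (0:ℝ) ≤ 2 * t), mul_one_div,
        div_self hθ.ne', Real.rpow_one] at h6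
    linarith
end

section
/- Let g : ℝ → ℝ be continuous, non-decreasing and everywhere positive, let C > 0, q ≥ 0, θ > 0 and τ ≥ θq + 1 be constants, let R ∈ (0,∞), and let v : [0,R) → ℝ solve the Cauchy problem (★) with v(0) = a and right derivative v'(0) = 0 at the origin. Then for every r ∈ (0,R): (v'(r))^{θ+1} ≤ ((θ+1)/θ) · C^θ · R^{τ − qθ − 1} · ∫_a^{v(r)} g(s) ds. -/
open Real MeasureTheory Set Filter Topology ENNReal

/-- Gradient bound (3.2)–(3.3) in the proof of Theorem 1.2: if `τ ≥ θq + 1` and `v`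
solves (★) on `[0, R)` (`R` finite) with right derivative `0` at the origin, then
`(v'(r))^{θ+1} ≤ ((θ+1)/θ) C^θ R^{τ-qθ-1} ∫_a^{v(r)} g(s) ds` for `r ∈ (0, R)`. -/
theorem gradient_bound
    (g : ℝ → ℝ) (hg_cont : Continuous g) (hg_mono : Monotone g) (hg_pos : ∀ t, 0 < g t)
    (C q θ τ a : ℝ) (hC : 0 < C) (hq : 0 ≤ q) (hθ : 0 < θ) (hτ : θ * q + 1 ≤ τ)
    (R : ℝ) (hR : 0 < R) (v : ℝ → ℝ)
    (hv : SolvesCauchy C q τ θ a g (ENNReal.ofReal R) v)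
    (hv0 : HasDerivWithinAt v 0 (Set.Ici 0) 0) :
    ∀ r ∈ Set.Ioo 0 R,
      (deriv v r) ^ (θ + 1) ≤
        (θ + 1) / θ * C ^ θ * R ^ (τ - q * θ - 1) * ∫ s in a..(v r), g s := by
  obtain ⟨hv_cont, hv_zero, hv_deriv⟩ := hv
  have hθq : 0 ≤ θ * q := mul_nonneg hθ.le hq
  have hτ1 : (1:ℝ) ≤ τ := by linarith
  have he0 : (0:ℝ) ≤ τ - 1 := by linarith
  have hee : (0:ℝ) ≤ τ - q * θ - 1 := by nlinarith
  have hlt : ∀ x : ℝ, x < R → ENNReal.ofReal x < ENNReal.ofReal R := fun x h =>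
    (ENNReal.ofReal_lt_ofReal_iff hR).2 h
  have hmemS : ∀ x : ℝ, 0 ≤ x → x < R →
      x ∈ {r : ℝ | 0 ≤ r ∧ ENNReal.ofReal r < ENNReal.ofReal R} :=
    fun x hx hxR => ⟨hx, hlt x hxR⟩
  set f : ℝ → ℝ := fun s => s ^ (τ - 1) * g (v s) with hf_def
  set F : ℝ → ℝ := fun x => ∫ s in (0:ℝ)..x, f s with hF_def
  set P : ℝ → ℝ := fun x => C ^ θ * (x ^ (-(q*θ)) * F x) with hP_def
  set pp : ℝ := (θ+1)/θ with hpp_def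
  set G : ℝ → ℝ := fun t => ∫ s in a..t, g s with hG_def
  set H : ℝ → ℝ := fun x => P x ^ pp with hH_def
  set K : ℝ := (θ + 1) / θ * C ^ θ * R ^ (τ - q * θ - 1) with hK_def
  set Φ : ℝ → ℝ := fun y => K * G (v y) - H y with hΦ_def
  have h1pp : (1:ℝ) ≤ pp := by rw [hpp_def, le_div_iff₀ hθ]; linarith
  have hpp1 : pp - 1 = 1/θ := by rw [hpp_def]; field_simp; ring
  -- continuity of v on initial segments
  have hv_cont' : ∀ b : ℝ, b < R → ContinuousOn v (Icc 0 b) := fun b hbR =>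
    hv_cont.mono fun x hx => hmemS x hx.1 (lt_of_le_of_lt hx.2 hbR)
  have hrpow_cont : Continuous fun s : ℝ => s ^ (τ - 1) :=
    continuous_iff_continuousAt.2 fun x => Real.continuousAt_rpow_const x _ (Or.inr he0)
  have hf_cont : ∀ b : ℝ, b < R → ContinuousOn f (Icc 0 b) := fun b hbR =>
    (hrpow_cont.continuousOn).mul (hg_cont.comp_continuousOn (hv_cont' b hbR))
  have hf_int : ∀ b : ℝ, 0 ≤ b → b < R → IntervalIntegrable f volume 0 b := by
    intro b hb hbR
    apply ContinuousOn.intervalIntegrable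
    rw [uIcc_of_le hb]; exact hf_cont b hbR
  have hF_nonneg : ∀ b : ℝ, 0 ≤ b → 0 ≤ F b := fun b hb =>
    intervalIntegral.integral_nonneg hb fun s hs =>
      mul_nonneg (Real.rpow_nonneg hs.1 _) (hg_pos _).le
  have hP_nonneg : ∀ b : ℝ, 0 ≤ b → 0 ≤ P b := fun b hb => by
    apply mul_nonneg (Real.rpow_nonneg hC.le _)
    exact mul_nonneg (Real.rpow_nonneg hb _) (hF_nonneg b hb)
  have hF_deriv : ∀ x : ℝ, 0 < x → x < R → HasDerivAt F (f x) x := by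
    intro x hx hxR
    set b : ℝ := (x + R) / 2 with hb_def
    have hxb : x < b := by rw [hb_def]; linarith
    have hbR : b < R := by rw [hb_def]; linarith
    have hb0 : 0 ≤ b := by rw [hb_def]; linarith
    have hco : ContinuousOn f (Ioo 0 b) := (hf_cont b hbR).mono Ioo_subset_Icc_self
    exact intervalIntegral.integral_hasDerivAt_right (hf_int x hx.le hxR)
      (hco.stronglyMeasurableAtFilter isOpen_Ioo x ⟨hx, hxb⟩)
      (hco.continuousAt (Ioo_mem_nhds hx hxb))
  -- key identity: the RHS equals P x ^ (1/θ)
  have hw_eq : ∀ x : ℝ, 0 < x → cauchyRHS C q τ θ g v x = P x ^ (1/θ) := by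
    intro x hx
    have h1 : cauchyRHS C q τ θ g v x = C * x ^ (-q) * (F x) ^ (1/θ) := rfl
    rw [h1, hP_def]
    rw [Real.mul_rpow (Real.rpow_nonneg hC.le _)
      (mul_nonneg (Real.rpow_nonneg hx.le _) (hF_nonneg x hx.le)),
      Real.mul_rpow (Real.rpow_nonneg hx.le _) (hF_nonneg x hx.le),
      ← Real.rpow_mul hC.le, ← Real.rpow_mul hx.le]
    have e1 : θ * (1/θ) = 1 := by field_simp
    have e2 : -(q*θ) * (1/θ) = -q := by field_simp
    rw [e1, e2, Real.rpow_one]; ring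
  -- derivative of P
  have hP_deriv : ∀ x : ℝ, 0 < x → x < R →
      HasDerivAt P (C ^ θ * (-(q*θ) * x ^ (-(q*θ) - 1) * F x + x ^ (-(q*θ)) * f x)) x := by
    intro x hx hxR
    have hu : HasDerivAt (fun y : ℝ => y ^ (-(q*θ))) (-(q*θ) * x ^ (-(q*θ) - 1)) x :=
      Real.hasDerivAt_rpow_const (Or.inl hx.ne')
    exact (hu.mul (hF_deriv x hx hxR)).const_mul _
  -- derivative of H
  have hH_deriv : ∀ x : ℝ, 0 < x → x < R →
      HasDerivAt H (pp * P x ^ (1/θ) *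
        (C ^ θ * (-(q*θ) * x ^ (-(q*θ) - 1) * F x + x ^ (-(q*θ)) * f x))) x := by
    intro x hx hxR
    have hrp : HasDerivAt (fun y : ℝ => y ^ pp) (pp * P x ^ (pp - 1)) (P x) :=
      Real.hasDerivAt_rpow_const (Or.inr h1pp)
    have := hrp.comp x (hP_deriv x hx hxR)
    rw [hpp1] at this
    exact this
  have hG_deriv : ∀ t : ℝ, HasDerivAt G (g t) t := fun t =>
    intervalIntegral.integral_hasDerivAt_right (hg_cont.intervalIntegrable a t)
      (hg_cont.stronglyMeasurableAtFilter _ _) hg_cont.continuousAt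
  -- derivative of Φ and its nonnegativity
  have hΦ_deriv : ∀ x : ℝ, 0 < x → x < R →
      HasDerivAt Φ (K * (g (v x) * cauchyRHS C q τ θ g v x) -
        pp * P x ^ (1/θ) *
        (C ^ θ * (-(q*θ) * x ^ (-(q*θ) - 1) * F x + x ^ (-(q*θ)) * f x))) x := by
    intro x hx hxR
    have h1 : HasDerivAt (fun y => G (v y)) (g (v x) * cauchyRHS C q τ θ g v x) x :=
      (hG_deriv (v x)).comp x (hv_deriv x hx (hlt x hxR))
    exact (h1.const_mul K).sub (hH_deriv x hx hxR)
  have hΦ'_nonneg : ∀ x : ℝ, 0 < x → x < R →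
      pp * P x ^ (1/θ) *
        (C ^ θ * (-(q*θ) * x ^ (-(q*θ) - 1) * F x + x ^ (-(q*θ)) * f x))
      ≤ K * (g (v x) * cauchyRHS C q τ θ g v x) := by
    intro x hx hxR
    have hw0 : 0 ≤ P x ^ (1/θ) := Real.rpow_nonneg (hP_nonneg x hx.le) _
    have hP'le : C ^ θ * (-(q*θ) * x ^ (-(q*θ) - 1) * F x + x ^ (-(q*θ)) * f x)
        ≤ C ^ θ * (R ^ (τ - q*θ - 1) * g (v x)) := by
      apply mul_le_mul_of_nonneg_left _ (Real.rpow_nonneg hC.le _)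
      have t1 : -(q*θ) * x ^ (-(q*θ) - 1) * F x ≤ 0 := by
        apply mul_nonpos_of_nonpos_of_nonneg _ (hF_nonneg x hx.le)
        exact mul_nonpos_of_nonpos_of_nonneg (by nlinarith) (Real.rpow_nonneg hx.le _)
      have t2 : x ^ (-(q*θ)) * f x = x ^ (τ - q*θ - 1) * g (v x) := by
        rw [hf_def]
        show x ^ (-(q*θ)) * (x ^ (τ-1) * g (v x)) = _
        rw [← mul_assoc, ← Real.rpow_add hx]
        ring_nf
      have t3 : x ^ (τ - q*θ - 1) ≤ R ^ (τ - q*θ - 1) :=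
        Real.rpow_le_rpow hx.le hxR.le hee
      have t4 : x ^ (τ - q*θ - 1) * g (v x) ≤ R ^ (τ - q*θ - 1) * g (v x) :=
        mul_le_mul_of_nonneg_right t3 (hg_pos _).le
      linarith [t2 ▸ t4]
    rw [hw_eq x hx]
    calc pp * P x ^ (1/θ) * (C ^ θ * (-(q*θ) * x ^ (-(q*θ) - 1) * F x + x ^ (-(q*θ)) * f x))
        ≤ pp * P x ^ (1/θ) * (C ^ θ * (R ^ (τ - q*θ - 1) * g (v x))) := by
          apply mul_le_mul_of_nonneg_left hP'le (mul_nonneg (by positivity) hw0)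
      _ = K * (g (v x) * P x ^ (1/θ)) := by rw [hK_def, hpp_def]; ring
  -- monotonicity of Φ on [ε, r] for 0 < ε < r < R
  have hΦ_mono : ∀ r : ℝ, r < R → ∀ ε : ℝ, 0 < ε → ε ≤ r → Φ ε ≤ Φ r := by
    intro r hrR ε hε hεr
    have hmem : ∀ x ∈ Icc ε r, 0 < x ∧ x < R := fun x hx =>
      ⟨lt_of_lt_of_le hε hx.1, lt_of_le_of_lt hx.2 hrR⟩
    have hmono : MonotoneOn Φ (Icc ε r) := by
      apply monotoneOn_of_deriv_nonneg (convex_Icc ε r)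
      · intro x hx
        exact (hΦ_deriv x (hmem x hx).1 (hmem x hx).2).continuousAt.continuousWithinAt
      · intro x hx
        rw [interior_Icc] at hx
        exact (hΦ_deriv x (hmem x (Ioo_subset_Icc_self hx)).1
          (hmem x (Ioo_subset_Icc_self hx)).2).differentiableAt.differentiableWithinAt
      · intro x hx
        rw [interior_Icc] at hx
        obtain ⟨hx1, hx2⟩ := hmem x (Ioo_subset_Icc_self hx)
        rw [(hΦ_deriv x hx1 hx2).deriv]
        have := hΦ'_nonneg x hx1 hx2
        linarith
    exact hmono ⟨le_refl ε, hεr⟩ ⟨hεr, le_refl r⟩ hεr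
  -- Φ tends to 0 as ε → 0⁺
  have hΦ_lim : Tendsto Φ (𝓝[>] (0:ℝ)) (𝓝 0) := by
    have hvt : Tendsto v (𝓝[>] (0:ℝ)) (𝓝 a) := by
      have h0S := hv_cont 0 (hmemS 0 le_rfl hR)
      have h1 : ContinuousWithinAt v (Ioo 0 R) 0 :=
        h0S.mono fun x hx => hmemS x hx.1.le hx.2
      have h2 : Tendsto v (𝓝[Ioo 0 R] 0) (𝓝 a) := by
        rw [← hv_zero]; exact h1
      rwa [nhdsWithin_Ioo_eq_nhdsGT hR] at h2
    have hGvt : Tendsto (fun ε => K * G (v ε)) (𝓝[>] (0:ℝ)) (𝓝 0) := by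
      have h1 : Tendsto (fun ε => G (v ε)) (𝓝[>] (0:ℝ)) (𝓝 (G a)) :=
        ((hG_deriv a).continuousAt.tendsto).comp hvt
      have h2 : G a = 0 := intervalIntegral.integral_same
      rw [h2] at h1
      simpa using h1.const_mul K
    have hHt : Tendsto H (𝓝[>] (0:ℝ)) (𝓝 0) := by
      -- bound for P near 0
      have hR2 : R/2 < R := by linarith
      obtain ⟨M, hM⟩ := isCompact_Icc.exists_bound_of_continuousOn
        (hg_cont.comp_continuousOn (hv_cont' (R/2) hR2))
      have hPbound : ∀ ε ∈ Ioo (0:ℝ) (R/2),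
          P ε ≤ C ^ θ * M / τ * ε ^ (τ - q*θ) := by
        intro ε hεm
        obtain ⟨hε, hεR2⟩ := hεm
        have hεR : ε < R := by linarith
        have hτ0 : (0:ℝ) < τ := by linarith
        have hFb : F ε ≤ ε ^ τ / τ * M := by
          have hint2 : IntervalIntegrable (fun s : ℝ => s ^ (τ-1) * M) volume 0 ε :=
            (hrpow_cont.mul continuous_const).intervalIntegrable 0 ε
          have h1 : F ε ≤ ∫ s in (0:ℝ)..ε, s ^ (τ-1) * M := by
            apply intervalIntegral.integral_mono_on hε.le (hf_int ε hε.le hεR) hint2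
            intro s hs
            apply mul_le_mul_of_nonneg_left _ (Real.rpow_nonneg hs.1 _)
            calc g (v s) ≤ ‖g (v s)‖ := le_abs_self _
              _ ≤ M := hM s ⟨hs.1, le_trans hs.2 hεR2.le⟩
          have h2 : ∫ s in (0:ℝ)..ε, s ^ (τ-1) * M = ε ^ τ / τ * M := by
            rw [intervalIntegral.integral_mul_const, integral_rpow (Or.inl (by linarith))]
            have e1 : τ - 1 + 1 = τ := by ring
            rw [e1, Real.zero_rpow hτ0.ne']
            ring
          linarith [h2 ▸ h1]
        have hM0 : 0 ≤ M := le_trans (norm_nonneg _) (hM 0 ⟨le_refl 0, by linarith⟩)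
        calc P ε = C ^ θ * (ε ^ (-(q*θ)) * F ε) := rfl
          _ ≤ C ^ θ * (ε ^ (-(q*θ)) * (ε ^ τ / τ * M)) := by
              apply mul_le_mul_of_nonneg_left _ (Real.rpow_nonneg hC.le _)
              exact mul_le_mul_of_nonneg_left hFb (Real.rpow_nonneg hε.le _)
          _ = C ^ θ * M / τ * (ε ^ (-(q*θ)) * ε ^ τ) := by ring
          _ = C ^ θ * M / τ * ε ^ (τ - q*θ) := by
              rw [← Real.rpow_add hε]; ring_nf
      have hPt : Tendsto P (𝓝[>] (0:ℝ)) (𝓝 0) := by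
        have hub : Tendsto (fun ε : ℝ => C ^ θ * M / τ * ε ^ (τ - q*θ)) (𝓝[>] (0:ℝ)) (𝓝 0) := by
          have h1 : Tendsto (fun ε : ℝ => ε ^ (τ - q*θ)) (𝓝[>] (0:ℝ)) (𝓝 0) := by
            have hc : ContinuousAt (fun ε : ℝ => ε ^ (τ - q*θ)) 0 :=
              Real.continuousAt_rpow_const 0 _ (Or.inr (by nlinarith))
            have h2 := hc.tendsto.mono_left (nhdsWithin_le_nhds : 𝓝[>] (0:ℝ) ≤ 𝓝 0)
            rwa [Real.zero_rpow (by nlinarith : τ - q*θ ≠ 0)] at h2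
          simpa using h1.const_mul (C ^ θ * M / τ)
        have hIoo : Ioo (0:ℝ) (R/2) ∈ 𝓝[>] (0:ℝ) := by
          rw [← nhdsWithin_Ioo_eq_nhdsGT (by linarith : (0:ℝ) < R/2)]
          exact self_mem_nhdsWithin
        apply squeeze_zero'
        · exact eventually_of_mem hIoo fun ε hε => hP_nonneg ε hε.1.le
        · exact eventually_of_mem hIoo fun ε hε => hPbound ε hε
        · exact hub
      have hc : ContinuousAt (fun y : ℝ => y ^ pp) 0 :=
        Real.continuousAt_rpow_const 0 _ (Or.inr (by linarith))
      have h1 := (hc.tendsto.comp hPt : Tendsto (fun x => P x ^ pp) (𝓝[>] (0:ℝ)) _)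
      rwa [Real.zero_rpow (by linarith : pp ≠ 0)] at h1
    have := hGvt.sub hHt
    simpa using this
  -- conclusion
  intro r hr
  obtain ⟨hr0, hrR⟩ := hr
  have hΦr : 0 ≤ Φ r := by
    have hev : ∀ᶠ ε in 𝓝[>] (0:ℝ), Φ ε ≤ Φ r := by
      have hIoo : Ioo (0:ℝ) r ∈ 𝓝[>] (0:ℝ) := by
        rw [← nhdsWithin_Ioo_eq_nhdsGT hr0]
        exact self_mem_nhdsWithin
      exact eventually_of_mem hIoo fun ε hε => hΦ_mono r hrR ε hε.1 hε.2.le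
    exact le_of_tendsto hΦ_lim hev
  have hdv : deriv v r = P r ^ (1/θ) := by
    rw [(hv_deriv r hr0 (hlt r hrR)).deriv, hw_eq r hr0]
  have hpow : (P r ^ (1/θ)) ^ (θ + 1) = H r := by
    have e : 1/θ * (θ + 1) = pp := by rw [hpp_def]; field_simp
    rw [hH_def, ← Real.rpow_mul (hP_nonneg r hr0.le), e]
  show (deriv v r) ^ (θ + 1) ≤ K * G (v r)
  rw [hdv, hpow]
  have : H r ≤ K * G (v r) := by
    have h1 : Φ r = K * G (v r) - H r := rfl
    linarith [h1 ▸ hΦr]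
  exact this
end

section
/- Let g : ℝ → ℝ be continuous, non-decreasing and everywhere positive, let C > 0, q ≥ 0, θ > 0 and τ > θq be constants, let R ∈ (0,∞], and let v : [0,R) → ℝ solve the Cauchy problem (★) with v(0) = a. Then lim_{r→0⁺} v'(r) / r^{(τ − θq)/θ} = C · (g(a)/τ)^{1/θ}. -/
open Real MeasureTheory Set Filter Topology ENNReal

/-- The asymptotic (2.25) in the proof of Lemma 2.2:
`v'(r)/r^{(τ-θq)/θ} → C (g(a)/τ)^{1/θ}` as `r → 0⁺`. -/
theorem first_deriv_asymptotics
    (g : ℝ → ℝ) (hg_cont : Continuous g) (hg_mono : Monotone g) (hg_pos : ∀ t, 0 < g t)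
    (C q θ τ a : ℝ) (hC : 0 < C) (hq : 0 ≤ q) (hθ : 0 < θ) (hτ : θ * q < τ)
    (R : ℝ≥0∞) (hR : 0 < R) (v : ℝ → ℝ)
    (hv : SolvesCauchy C q τ θ a g R v) :
    Tendsto (fun r => deriv v r / r ^ ((τ - θ * q) / θ)) (𝓝[>] 0)
      (𝓝 (C * (g a / τ) ^ (1 / θ))) := by
  obtain ⟨hvc, hv0, hvd⟩ := hv
  have hτ0 : 0 < τ := lt_of_le_of_lt (mul_nonneg hθ.le hq) hτ
  set S : Set ℝ := {r : ℝ | 0 ≤ r ∧ ENNReal.ofReal r < R} with hSdef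
  -- choose a positive radius r0 with Icc 0 r0 ⊆ S
  set m : ℝ≥0∞ := min R 1 with hm
  have hm0 : 0 < m := lt_min hR zero_lt_one
  have hmtop : m ≠ ⊤ := ne_top_of_le_ne_top ENNReal.one_ne_top (min_le_right _ _)
  set r0 : ℝ := m.toReal / 2 with hr0def
  have htm : 0 < m.toReal := ENNReal.toReal_pos hm0.ne' hmtop
  have hr0 : 0 < r0 := by positivity
  have hr0S : Icc 0 r0 ⊆ S := by
    intro s hs
    refine ⟨hs.1, lt_of_le_of_lt (ENNReal.ofReal_le_ofReal hs.2) ?_⟩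
    have h1 : ENNReal.ofReal r0 < ENNReal.ofReal m.toReal :=
      (ENNReal.ofReal_lt_ofReal_iff htm).mpr (by linarith)
    rw [ENNReal.ofReal_toReal hmtop] at h1
    exact lt_of_lt_of_le h1 (min_le_left _ _)
  set F : ℝ → ℝ := fun r => ∫ s in (0:ℝ)..r, s ^ (τ - 1) * g (v s) with hFdef
  -- continuity of g ∘ v on Icc 0 r0
  have hw : ContinuousOn (fun s => g (v s)) (Icc 0 r0) :=
    hg_cont.comp_continuousOn (hvc.mono hr0S)
  -- integrability
  have hint : ∀ r : ℝ, 0 < r → r ≤ r0 →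
      IntervalIntegrable (fun s => s ^ (τ - 1) * g (v s)) volume 0 r := by
    intro r hr hrr0
    obtain ⟨M, hM⟩ := (isCompact_Icc).exists_bound_of_continuousOn hw
    have hbase : IntervalIntegrable (fun s : ℝ => s ^ (τ - 1)) volume 0 r :=
      intervalIntegral.intervalIntegrable_rpow' (by linarith)
    have hMint : IntervalIntegrable (fun s : ℝ => M * s ^ (τ - 1)) volume 0 r :=
      hbase.const_mul M
    refine hMint.mono_fun ?_ ?_
    · rw [Set.uIoc_of_le hr.le]
      refine ContinuousOn.aestronglyMeasurable ?_ measurableSet_Ioc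
      refine ContinuousOn.mul ?_ (hw.mono ?_)
      · intro s hs
        exact (Real.continuousAt_rpow_const s (τ - 1) (Or.inl hs.1.ne')).continuousWithinAt
      · exact fun s hs => ⟨hs.1.le, hs.2.trans hrr0⟩
    · rw [Set.uIoc_of_le hr.le]
      filter_upwards [ae_restrict_mem measurableSet_Ioc] with s hs
      have hs0 : 0 ≤ s := hs.1.le
      have hrp : 0 ≤ s ^ (τ - 1) := Real.rpow_nonneg hs0 _
      have hgb : g (v s) ≤ M := by
        have := hM s ⟨hs0, hs.2.trans hrr0⟩
        exact (le_of_abs_le this)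
      have h1 : ‖s ^ (τ - 1) * g (v s)‖ = s ^ (τ - 1) * g (v s) := by
        rw [Real.norm_eq_abs, abs_of_nonneg (mul_nonneg hrp (hg_pos _).le)]
      rw [h1]
      calc s ^ (τ - 1) * g (v s) ≤ s ^ (τ - 1) * M := by
            exact mul_le_mul_of_nonneg_left hgb hrp
        _ = M * s ^ (τ - 1) := by ring
        _ ≤ ‖M * s ^ (τ - 1)‖ := le_abs_self _
  -- value of the model integral
  have hmodel : ∀ r : ℝ, 0 < r → (∫ s in (0:ℝ)..r, s ^ (τ - 1)) = r ^ τ / τ := by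
    intro r hr
    rw [integral_rpow (Or.inl (by linarith : (-1:ℝ) < τ - 1))]
    have : τ - 1 + 1 = τ := by ring
    rw [this, Real.zero_rpow hτ0.ne']
    ring
  -- main limit for F r / r ^ τ
  have hFlim : Tendsto (fun r => F r / r ^ τ) (𝓝[>] (0:ℝ)) (𝓝 (g a / τ)) := by
    rw [Metric.tendsto_nhdsWithin_nhds]
    intro ε hε
    set ε1 : ℝ := ε * τ / 2 with hε1def
    have hε1 : 0 < ε1 := by positivity
    have hw0 : ContinuousWithinAt (fun s => g (v s)) (Icc 0 r0) 0 :=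
      hw 0 ⟨le_refl 0, hr0.le⟩
    rw [Metric.continuousWithinAt_iff] at hw0
    obtain ⟨δ, hδ, hδ'⟩ := hw0 ε1 hε1
    refine ⟨min (δ / 2) r0, lt_min (by linarith) hr0, ?_⟩
    intro r hrmem hrd
    have hr : 0 < r := hrmem
    rw [Real.dist_eq, sub_zero, abs_of_nonneg hr.le] at hrd
    have hrδ : r < δ := lt_of_lt_of_le hrd (le_trans (min_le_left _ _) (by linarith))
    have hrr0 : r ≤ r0 := le_of_lt (lt_of_lt_of_le hrd (min_le_right _ _))
    have hgbound : ∀ s ∈ Icc 0 r, g a - ε1 ≤ g (v s) ∧ g (v s) ≤ g a + ε1 := by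
      intro s hs
      have hsmem : s ∈ Icc 0 r0 := ⟨hs.1, hs.2.trans hrr0⟩
      have hsd : dist s 0 < δ := by
        rw [Real.dist_eq, sub_zero, abs_of_nonneg hs.1]
        exact lt_of_le_of_lt hs.2 hrδ
      have := hδ' hsmem hsd
      rw [Real.dist_eq] at this
      have h2 : g (v 0) = g a := by rw [hv0]
      rw [h2] at this
      have h3 := abs_lt.mp this
      exact ⟨by linarith [h3.1], by linarith [h3.2]⟩
    have hrτ : 0 < r ^ τ := Real.rpow_pos_of_pos hr τ
    have hintr := hint r hr hrr0
    have hbase : IntervalIntegrable (fun s : ℝ => s ^ (τ - 1)) volume 0 r :=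
      intervalIntegral.intervalIntegrable_rpow' (by linarith)
    have hlow : (g a - ε1) * (r ^ τ / τ) ≤ F r := by
      have h1 : (∫ s in (0:ℝ)..r, (g a - ε1) * s ^ (τ - 1)) ≤ F r := by
        refine intervalIntegral.integral_mono_on hr.le (hbase.const_mul _) hintr ?_
        intro s hs
        have hrp : 0 ≤ s ^ (τ - 1) := Real.rpow_nonneg hs.1 _
        have := (hgbound s hs).1
        calc (g a - ε1) * s ^ (τ - 1) ≤ g (v s) * s ^ (τ - 1) :=
              mul_le_mul_of_nonneg_right this hrp
          _ = s ^ (τ - 1) * g (v s) := by ring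
      rwa [intervalIntegral.integral_const_mul, hmodel r hr] at h1
    have hup : F r ≤ (g a + ε1) * (r ^ τ / τ) := by
      have h1 : F r ≤ ∫ s in (0:ℝ)..r, (g a + ε1) * s ^ (τ - 1) := by
        refine intervalIntegral.integral_mono_on hr.le hintr (hbase.const_mul _) ?_
        intro s hs
        have hrp : 0 ≤ s ^ (τ - 1) := Real.rpow_nonneg hs.1 _
        have := (hgbound s hs).2
        calc s ^ (τ - 1) * g (v s) = g (v s) * s ^ (τ - 1) := by ring
          _ ≤ (g a + ε1) * s ^ (τ - 1) := mul_le_mul_of_nonneg_right this hrp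
      rwa [intervalIntegral.integral_const_mul, hmodel r hr] at h1
    rw [Real.dist_eq, abs_lt]
    have hup' : F r / r ^ τ ≤ (g a + ε1) / τ := by
      rw [div_le_div_iff₀ hrτ hτ0]
      calc F r * τ ≤ (g a + ε1) * (r ^ τ / τ) * τ := mul_le_mul_of_nonneg_right hup hτ0.le
        _ = (g a + ε1) * r ^ τ := by field_simp
    have hlow' : (g a - ε1) / τ ≤ F r / r ^ τ := by
      rw [div_le_div_iff₀ hτ0 hrτ]
      calc (g a - ε1) * r ^ τ = (g a - ε1) * (r ^ τ / τ) * τ := by field_simp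
        _ ≤ F r * τ := mul_le_mul_of_nonneg_right hlow hτ0.le
    have hε1τ : ε1 / τ = ε / 2 := by rw [hε1def]; field_simp
    constructor
    · have : (g a - ε1) / τ = g a / τ - ε1 / τ := by ring
      rw [this, hε1τ] at hlow'
      linarith
    · have : (g a + ε1) / τ = g a / τ + ε1 / τ := by ring
      rw [this, hε1τ] at hup'
      linarith
  -- compose with continuous map x ↦ C * x^(1/θ)
  have hpos : (0:ℝ) < g a / τ := div_pos (hg_pos a) hτ0
  have hcont : ContinuousAt (fun x : ℝ => C * x ^ (1 / θ)) (g a / τ) :=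
    continuousAt_const.mul (Real.continuousAt_rpow_const _ _ (Or.inl hpos.ne'))
  have hmain : Tendsto (fun r => C * (F r / r ^ τ) ^ (1 / θ)) (𝓝[>] (0:ℝ))
      (𝓝 (C * (g a / τ) ^ (1 / θ))) := hcont.tendsto.comp hFlim
  refine hmain.congr' ?_
  filter_upwards [Ioo_mem_nhdsGT_of_mem (⟨le_refl 0, hr0⟩ : (0:ℝ) ∈ Ico 0 r0)] with r hr
  obtain ⟨hr1, hr2⟩ := hr
  have hrS : r ∈ S := hr0S ⟨hr1.le, hr2.le⟩
  have hd := hvd r hr1 hrS.2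
  rw [hd.deriv]
  have hF0 : 0 ≤ F r :=
    intervalIntegral.integral_nonneg hr1.le
      (fun u hu => mul_nonneg (Real.rpow_nonneg hu.1 _) (hg_pos _).le)
  show C * (F r / r ^ τ) ^ (1 / θ) = cauchyRHS C q τ θ g v r / r ^ ((τ - θ * q) / θ)
  unfold cauchyRHS
  have hFr : (∫ s in (0:ℝ)..r, s ^ (τ - 1) * g (v s)) = F r := rfl
  rw [hFr]
  have hexp : (τ - θ * q) / θ = τ * (1 / θ) + (-q) := by field_simp; ring
  rw [hexp, Real.rpow_add hr1, Real.div_rpow hF0 (Real.rpow_nonneg hr1.le τ),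
    ← Real.rpow_mul hr1.le]
  have h1 : (0:ℝ) < r ^ (τ * (1 / θ)) := Real.rpow_pos_of_pos hr1 _
  have h2 : (0:ℝ) < r ^ (-q) := Real.rpow_pos_of_pos hr1 _
  field_simp
end

section
/- Let g : ℝ → ℝ be continuous, non-decreasing and everywhere positive, let C > 0, q ≥ 0, θ > 0 and τ be constants with θq < τ < θq + 1, let ε ∈ (0, τ − θq) and set κ := (1 − ε)/(τ − θq − ε). Let R ∈ (0,∞) and let v : [0,R) → ℝ solve the Cauchy problem (★) with v(0) = a and right derivative v'(0) = 0 at the origin. Then for every r ∈ (0,R): (v'(r))^{θ + 1/κ} ≤ ((θ + 1/κ)/θ) · C^θ · (R^ε/ε)^{(θq + 1 − τ)/(1 − ε)} · (∫_a^{v(r)} g(s)^κ ds)^{1/κ}. -/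
open Real MeasureTheory Set Filter Topology ENNReal

/-- The Hölder-inequality gradient bound (3.16) in the proof of Theorem 1.3: with
`θq < τ < θq + 1`, `ε ∈ (0, τ - θq)` and `κ = (1-ε)/(τ-θq-ε)`, every solution of (★)
on `[0, R)` with right derivative `0` at the origin satisfies, for `r ∈ (0, R)`,
`(v'(r))^{θ+1/κ} ≤ ((θ+1/κ)/θ) C^θ (R^ε/ε)^{(θq+1-τ)/(1-ε)} (∫_a^{v(r)} g^κ)^{1/κ}`. -/
theorem holder_gradient_bound
    (g : ℝ → ℝ) (hg_cont : Continuous g) (hg_mono : Monotone g) (hg_pos : ∀ t, 0 < g t)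
    (C q θ τ a : ℝ) (hC : 0 < C) (hq : 0 ≤ q) (hθ : 0 < θ)
    (hτ1 : θ * q < τ) (hτ2 : τ < θ * q + 1)
    (ε : ℝ) (hε1 : 0 < ε) (hε2 : ε < τ - θ * q)
    (R : ℝ) (hR : 0 < R) (v : ℝ → ℝ)
    (hv : SolvesCauchy C q τ θ a g (ENNReal.ofReal R) v)
    (hv0 : HasDerivWithinAt v 0 (Set.Ici 0) 0) :
    ∀ r ∈ Set.Ioo 0 R,
      (deriv v r) ^ (θ + 1 / ((1 - ε) / (τ - θ * q - ε))) ≤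
        (θ + 1 / ((1 - ε) / (τ - θ * q - ε))) / θ * C ^ θ *
          (R ^ ε / ε) ^ ((θ * q + 1 - τ) / (1 - ε)) *
          (∫ s in a..(v r), g s ^ ((1 - ε) / (τ - θ * q - ε))) ^
            (1 / ((1 - ε) / (τ - θ * q - ε))) := by
  intro r hr
  obtain ⟨hr0, hrR⟩ := hr
  set k : ℝ := (1 - ε) / (τ - θ * q - ε) with hkdef
  -- basic positivity facts
  have hθq : 0 ≤ θ * q := mul_nonneg hθ.le hq
  have hτ0 : 0 < τ := lt_of_le_of_lt hθq hτ1
  have h1ε : 0 < 1 - ε := by linarith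
  have hden : 0 < τ - θ * q - ε := by linarith
  have hk0 : 0 < k := div_pos h1ε hden
  have hk1 : 1 < k := (one_lt_div hden).mpr (by linarith)
  set p : ℝ := (1 - ε) / (θ * q + 1 - τ) with hpdef
  have hp0 : 0 < θ * q + 1 - τ := by linarith
  have hppos : 0 < p := div_pos h1ε hp0
  have hp1 : 1 < p := (one_lt_div hp0).mpr (by linarith)
  have hconj : p.HolderConjugate k := by
    refine Real.holderConjugate_iff.mpr ⟨hp1, ?_⟩
    rw [hpdef, hkdef, inv_div, inv_div, ← add_div,
      show θ * q + 1 - τ + (τ - θ * q - ε) = 1 - ε by ring, div_self h1ε.ne']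
  have hpinv : 1 / p = (θ * q + 1 - τ) / (1 - ε) := one_div_div _ _
  set e : ℝ := θ + 1 / k with hedef
  have he0 : 0 < e := by positivity
  set γ : ℝ := e / θ with hγdef
  have hγ1 : 1 < γ := by
    rw [hγdef, lt_div_iff₀ hθ]
    rw [hedef]; nlinarith [one_div_pos.mpr hk0]
  have hγ0 : 0 < γ := lt_trans one_pos hγ1
  have hθγ : θ * (γ - 1) = 1 / k := by
    rw [hγdef, hedef]; field_simp; ring
  -- the primitive F
  set F : ℝ → ℝ := fun t => ∫ s in (0:ℝ)..t, s ^ (τ - 1) * g (v s) with hFdef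
  set S : Set ℝ := {r : ℝ | 0 ≤ r ∧ ENNReal.ofReal r < ENNReal.ofReal R} with hSdef
  have hmemS : ∀ x : ℝ, 0 ≤ x → x < R → x ∈ S := by
    intro x h0 h1
    exact ⟨h0, (ENNReal.ofReal_lt_ofReal_iff hR).mpr h1⟩
  have hvS : ContinuousOn v S := hv.1
  have hvIcc : ContinuousOn v (Icc 0 r) :=
    hvS.mono (fun x hx => hmemS x hx.1 (lt_of_le_of_lt hx.2 hrR))
  -- a uniform bound for g ∘ v on [0, r]
  obtain ⟨c, hcmem, hcmax⟩ : ∃ c ∈ Icc (0:ℝ) r, IsMaxOn v (Icc 0 r) c := by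
    exact isCompact_Icc.exists_isMaxOn (nonempty_Icc.mpr hr0.le) hvIcc
  set M : ℝ := g (v c) with hMdef
  have hM0 : 0 < M := hg_pos _
  have hgvM : ∀ s ∈ Icc (0:ℝ) r, g (v s) ≤ M := fun s hs => hg_mono (hcmax hs)
  -- integrability of the integrand of F
  have hInt : ∀ t, 0 ≤ t → t ≤ r →
      IntervalIntegrable (fun s => s ^ (τ - 1) * g (v s)) volume 0 t := by
    intro t h0 htr
    have hmaj : IntervalIntegrable (fun s : ℝ => M * s ^ (τ - 1)) volume 0 t :=
      (intervalIntegral.intervalIntegrable_rpow' (by linarith)).const_mul M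
    apply hmaj.mono_fun
    · apply ContinuousOn.aestronglyMeasurable _ measurableSet_uIoc
      rw [Set.uIoc_of_le h0]
      apply ContinuousOn.mul
      · exact fun x hx =>
          ((Real.continuousAt_rpow_const x (τ-1) (Or.inl hx.1.ne')).continuousWithinAt)
      · exact hg_cont.comp_continuousOn (hvIcc.mono
          (fun x hx => ⟨hx.1.le, hx.2.trans htr⟩))
    · rw [Set.uIoc_of_le h0]
      filter_upwards [ae_restrict_mem measurableSet_Ioc] with x hx
      have hx1 : (0:ℝ) < x := hx.1
      have hrp : (0:ℝ) ≤ x ^ (τ - 1) := rpow_nonneg hx1.le _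
      rw [Real.norm_of_nonneg (mul_nonneg hrp (hg_pos _).le),
        Real.norm_of_nonneg (mul_nonneg hM0.le hrp)]
      calc x ^ (τ-1) * g (v x) ≤ x ^ (τ-1) * M :=
            mul_le_mul_of_nonneg_left (hgvM x ⟨hx1.le, hx.2.trans htr⟩) hrp
        _ = M * x ^ (τ-1) := mul_comm _ _
  have hFpos : ∀ t, 0 < t → t ≤ r → 0 < F t := by
    intro t ht0 htr
    exact intervalIntegral.intervalIntegral_pos_of_pos_on (hInt t ht0.le htr)
      (fun x hx => mul_pos (rpow_pos_of_pos hx.1 _) (hg_pos _)) ht0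
  have hFnonneg : ∀ t, 0 ≤ t → t ≤ r → 0 ≤ F t := by
    intro t ht0 htr
    refine intervalIntegral.integral_nonneg ht0 (fun u hu => ?_)
    exact mul_nonneg (rpow_nonneg hu.1 _) (hg_pos _).le
  -- derivative of F
  have hvca : ∀ t, 0 < t → t < R → ContinuousAt v t := by
    intro t h1 h2
    apply hvS.continuousAt
    filter_upwards [Ioo_mem_nhds h1 h2] with x hx
    exact hmemS x hx.1.le hx.2
  have hFderiv : ∀ t, 0 < t → t ≤ r → HasDerivAt F (t ^ (τ - 1) * g (v t)) t := by
    have hcont : ContinuousOn (fun s => s ^ (τ - 1) * g (v s)) (Ioo 0 R) := by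
      intro x hx
      exact (((Real.continuousAt_rpow_const x (τ-1) (Or.inl hx.1.ne')).mul
        (hg_cont.continuousAt.comp (hvca x hx.1 hx.2)))).continuousWithinAt
    intro t h1 h2
    apply intervalIntegral.integral_hasDerivAt_right (hInt t h1.le h2)
      (hcont.stronglyMeasurableAtFilter isOpen_Ioo t ⟨h1, lt_of_le_of_lt h2 hrR⟩)
    exact (Real.continuousAt_rpow_const t (τ-1) (Or.inl h1.ne')).mul
        (hg_cont.continuousAt.comp (hvca t h1 (lt_of_le_of_lt h2 hrR)))
  have hFcont : ∀ t, 0 < t → t ≤ r → ContinuousAt F t :=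
    fun t h1 h2 => (hFderiv t h1 h2).continuousAt
  -- the derivative function w of v
  set w : ℝ → ℝ := fun t => C * t ^ (-q) * F t ^ (1 / θ) with hwdef
  have hvd : ∀ t, 0 < t → t < R → HasDerivAt v (w t) t := by
    intro t h1 h2
    exact hv.2.2 t h1 ((ENNReal.ofReal_lt_ofReal_iff hR).mpr h2)
  have hwpos : ∀ t, 0 < t → t ≤ r → 0 < w t := by
    intro t h1 h2
    exact mul_pos (mul_pos hC (rpow_pos_of_pos h1 _)) (rpow_pos_of_pos (hFpos t h1 h2) _)
  have hwcont : ∀ t, 0 < t → t ≤ r → ContinuousAt w t := by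
    intro t h1 h2
    exact ((continuousAt_const.mul ((Real.continuousAt_rpow_const t (-q)
      (Or.inl h1.ne')))).mul ((hFcont t h1 h2).rpow_const (Or.inr (by positivity))))
  -- monotonicity of v on [0, r]
  have hmono : StrictMonoOn v (Icc 0 r) := by
    apply strictMonoOn_of_deriv_pos (convex_Icc 0 r) hvIcc
    intro x hx
    rw [interior_Icc] at hx
    rw [(hvd x hx.1 (lt_trans hx.2 hrR)).deriv]
    exact hwpos x hx.1 hx.2.le
  have hva : ∀ t, 0 ≤ t → t ≤ r → a ≤ v t := by
    intro t h1 h2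
    rcases eq_or_lt_of_le h1 with h | h
    · rw [← h, hv.2.1]
    · rw [← hv.2.1]
      exact (hmono (left_mem_Icc.mpr hr0.le) ⟨h1, h2⟩ h).le
  -- G-integral terms
  have hGcont : Continuous (fun u => g u ^ k) :=
    hg_cont.rpow_const (fun x => Or.inl (hg_pos x).ne')
  have hGnonneg : ∀ u, 0 ≤ g u ^ k := fun u => rpow_nonneg (hg_pos u).le _
  -- the main claim for each δ ∈ (0, r)
  have claim : ∀ δ ∈ Ioo (0:ℝ) r,
      r ^ (-(q * e)) * (F r ^ γ - F δ ^ γ) ≤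
        γ * C ^ (-(1 / k)) * (R ^ ε / ε) ^ (1 / p) *
          (∫ s in a..(v r), g s ^ k) ^ (1 / k) := by
    intro δ hδm
    obtain ⟨hδ0, hδr⟩ := hδm
    have hδr' : δ ≤ r := hδr.le
    -- continuity of the FTC integrand
    have hcontA : ContinuousOn
        (fun s => (s ^ (τ-1) * g (v s)) * γ * F s ^ (γ-1)) (uIcc δ r) := by
      rw [uIcc_of_le hδr']
      intro x hx
      have hx0 : 0 < x := lt_of_lt_of_le hδ0 hx.1
      exact ((((Real.continuousAt_rpow_const x (τ-1) (Or.inl hx0.ne')).mul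
        (hg_cont.continuousAt.comp (hvca x hx0 (lt_of_le_of_lt hx.2 hrR)))).mul
        continuousAt_const).mul
        ((hFcont x hx0 hx.2).rpow_const (Or.inr (by linarith)))).continuousWithinAt
    -- Step A : FTC for F ^ γ
    have hA : F r ^ γ - F δ ^ γ =
        ∫ s in δ..r, (s ^ (τ-1) * g (v s)) * γ * F s ^ (γ-1) := by
      have hder : ∀ s ∈ uIcc δ r, HasDerivAt (fun t => F t ^ γ)
          ((s ^ (τ-1) * g (v s)) * γ * F s ^ (γ-1)) s := by
        intro s hs
        rw [uIcc_of_le hδr'] at hs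
        exact (hFderiv s (lt_of_lt_of_le hδ0 hs.1) hs.2).rpow_const (Or.inr hγ1.le)
      exact (intervalIntegral.integral_eq_sub_of_hasDerivAt hder
        (hcontA.intervalIntegrable)).symm
    -- pointwise identity for F ^ (γ - 1)
    have hFs_id : ∀ s ∈ Icc δ r,
        F s ^ (γ-1) = w s ^ (1/k) * s ^ (q/k) * C ^ (-(1/k)) := by
      intro s hs
      have hs0 : 0 < s := lt_of_lt_of_le hδ0 hs.1
      have hFs0 : 0 < F s := hFpos s hs0 hs.2
      have hws0 : 0 < w s := hwpos s hs0 hs.2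
      have hsq : s ^ (-q) * s ^ q = 1 := by
        rw [← Real.rpow_add hs0, neg_add_cancel, Real.rpow_zero]
      have h1 : F s ^ (1/θ) = w s * s ^ q / C := by
        symm
        calc w s * s ^ q / C = (C * s ^ (-q) * F s ^ (1/θ)) * s ^ q / C := by rw [hwdef]
          _ = F s ^ (1/θ) * (s ^ (-q) * s ^ q) * (C / C) := by ring
          _ = F s ^ (1/θ) := by rw [hsq, div_self hC.ne', mul_one, mul_one]
      have h2 : F s ^ (γ-1) = (F s ^ (1/θ)) ^ (θ * (γ-1)) := by
        rw [← Real.rpow_mul hFs0.le]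
        congr 1
        field_simp
      rw [h2, h1, hθγ, div_rpow (by positivity) hC.le,
        mul_rpow hws0.le (rpow_nonneg hs0.le _), ← Real.rpow_mul hs0.le,
        show q * (1/k) = q / k by ring, div_eq_mul_inv, ← Real.rpow_neg hC.le]
    -- Step B : pointwise bound
    have hB : ∀ s ∈ Icc δ r,
        r ^ (-(q*e)) * ((s ^ (τ-1) * g (v s)) * γ * F s ^ (γ-1)) ≤
          γ * C ^ (-(1/k)) * (s ^ (τ-1-θ*q) * (g (v s) * w s ^ (1/k))) := by
      intro s hs
      have hs0 : 0 < s := lt_of_lt_of_le hδ0 hs.1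
      have hws0 : 0 < w s := hwpos s hs0 hs.2
      have key : r ^ (-(q*e)) * s ^ (q/k) ≤ s ^ (-(θ*q)) := by
        calc r ^ (-(q*e)) * s ^ (q/k) ≤ s ^ (-(q*e)) * s ^ (q/k) := by
              apply mul_le_mul_of_nonneg_right _ (rpow_nonneg hs0.le _)
              exact Real.rpow_le_rpow_of_nonpos hs0 hs.2
                (neg_nonpos.mpr (mul_nonneg hq he0.le))
          _ = s ^ (-(q*e) + q/k) := (Real.rpow_add hs0 _ _).symm
          _ = s ^ (-(θ*q)) := by
              congr 1
              rw [hedef]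
              ring
      rw [hFs_id s hs, show s ^ (τ-1-θ*q) = s ^ (τ-1) * s ^ (-(θ*q)) by
        rw [show τ-1-θ*q = (τ-1) + -(θ*q) by ring, Real.rpow_add hs0]]
      calc r ^ (-(q*e)) * ((s ^ (τ-1) * g (v s)) * γ * (w s ^ (1/k) * s ^ (q/k) * C ^ (-(1/k))))
          = (γ * C ^ (-(1/k)) * (s ^ (τ-1) * (g (v s) * w s ^ (1/k)))) *
              (r ^ (-(q*e)) * s ^ (q/k)) := by ring
        _ ≤ (γ * C ^ (-(1/k)) * (s ^ (τ-1) * (g (v s) * w s ^ (1/k)))) * s ^ (-(θ*q)) := by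
              apply mul_le_mul_of_nonneg_left key
              exact mul_nonneg (mul_nonneg hγ0.le (rpow_nonneg hC.le _))
                (mul_nonneg (rpow_nonneg hs0.le _)
                  (mul_nonneg (hg_pos _).le (rpow_nonneg hws0.le _)))
        _ = γ * C ^ (-(1/k)) * (s ^ (τ-1) * s ^ (-(θ*q)) * (g (v s) * w s ^ (1/k))) := by
              ring
    -- continuity of the RHS integrand
    have hcontB : ContinuousOn
        (fun s => s ^ (τ-1-θ*q) * (g (v s) * w s ^ (1/k))) (Icc δ r) := by
      intro x hx
      have hx0 : 0 < x := lt_of_lt_of_le hδ0 hx.1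
      exact ((Real.continuousAt_rpow_const x _ (Or.inl hx0.ne')).mul
        ((hg_cont.continuousAt.comp (hvca x hx0 (lt_of_le_of_lt hx.2 hrR))).mul
        ((hwcont x hx0 hx.2).rpow_const
          (Or.inr (one_div_nonneg.mpr hk0.le))))).continuousWithinAt
    -- Step C : integral inequality
    have hC1 : r ^ (-(q*e)) * (F r ^ γ - F δ ^ γ) ≤
        γ * C ^ (-(1/k)) *
          ∫ s in δ..r, s ^ (τ-1-θ*q) * (g (v s) * w s ^ (1/k)) := by
      rw [hA, ← intervalIntegral.integral_const_mul, ← intervalIntegral.integral_const_mul]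
      apply intervalIntegral.integral_mono_on hδr'
      · exact (continuousOn_const.mul hcontA).intervalIntegrable
      · apply ContinuousOn.intervalIntegrable
        rw [uIcc_of_le hδr']
        exact continuousOn_const.mul hcontB
      · exact hB
    -- Step D : Hölder
    have hmem : ∀ (f : ℝ → ℝ) (pp : ℝ), ContinuousOn f (Icc δ r) →
        MemLp f (ENNReal.ofReal pp) (volume.restrict (Ioc δ r)) := by
      intro f pp hf
      obtain ⟨B, hBd⟩ := isCompact_Icc.exists_bound_of_continuousOn hf
      apply MemLp.of_bound
        ((hf.mono Ioc_subset_Icc_self).aestronglyMeasurable measurableSet_Ioc) B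
      filter_upwards [ae_restrict_mem measurableSet_Ioc] with x hx
      exact hBd x (Ioc_subset_Icc_self hx)
    have hwInt : 0 ≤ ∫ s in δ..r, g (v s) ^ k * w s := by
      apply intervalIntegral.integral_nonneg hδr'
      intro u hu
      exact mul_nonneg (hGnonneg _) (hwpos u (lt_of_lt_of_le hδ0 hu.1) hu.2).le
    have hHold : ∫ s in δ..r, s ^ (τ-1-θ*q) * (g (v s) * w s ^ (1/k)) ≤
        (∫ s in δ..r, s ^ (ε-1)) ^ (1/p) * (∫ s in δ..r, g (v s) ^ k * w s) ^ (1/k) := by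
      rw [intervalIntegral.integral_of_le hδr', intervalIntegral.integral_of_le hδr',
        intervalIntegral.integral_of_le hδr']
      haveI : IsFiniteMeasure (volume.restrict (Ioc δ r)) :=
        ⟨by rw [Measure.restrict_apply_univ, Real.volume_Ioc]; exact ofReal_lt_top⟩
      have hfnn : 0 ≤ᵐ[volume.restrict (Ioc δ r)] fun s : ℝ => s ^ (τ-1-θ*q) := by
        filter_upwards [ae_restrict_mem measurableSet_Ioc] with x hx
        exact rpow_nonneg (lt_trans hδ0 hx.1).le _
      have hgnn : 0 ≤ᵐ[volume.restrict (Ioc δ r)] fun s => g (v s) * w s ^ (1/k) := by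
        filter_upwards [ae_restrict_mem measurableSet_Ioc] with x hx
        exact mul_nonneg (hg_pos _).le
          (rpow_nonneg (hwpos x (lt_trans hδ0 hx.1) hx.2).le _)
      have hfc : ContinuousOn (fun s : ℝ => s ^ (τ-1-θ*q)) (Icc δ r) := fun x hx =>
        (Real.continuousAt_rpow_const x _
          (Or.inl (lt_of_lt_of_le hδ0 hx.1).ne')).continuousWithinAt
      have hgc : ContinuousOn (fun s => g (v s) * w s ^ (1/k)) (Icc δ r) := by
        intro x hx
        have hx0 : 0 < x := lt_of_lt_of_le hδ0 hx.1
        exact ((hg_cont.continuousAt.comp (hvca x hx0 (lt_of_le_of_lt hx.2 hrR))).mul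
          ((hwcont x hx0 hx.2).rpow_const
            (Or.inr (one_div_nonneg.mpr hk0.le)))).continuousWithinAt
      have hH := integral_mul_le_Lp_mul_Lq_of_nonneg hconj hfnn hgnn
        (hmem _ p hfc) (hmem _ k hgc)
      have e1 : ∫ x in Ioc δ r, (fun s : ℝ => s ^ (τ-1-θ*q)) x ^ p =
          ∫ x in Ioc δ r, x ^ (ε-1) := by
        apply setIntegral_congr_fun measurableSet_Ioc
        intro x hx
        simp only
        rw [← Real.rpow_mul (lt_trans hδ0 hx.1).le, show (τ-1-θ*q) * p = ε-1 by
          rw [hpdef]; field_simp; ring]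
      have e2 : ∫ x in Ioc δ r, (fun s => g (v s) * w s ^ (1/k)) x ^ k =
          ∫ x in Ioc δ r, g (v x) ^ k * w x := by
        apply setIntegral_congr_fun measurableSet_Ioc
        intro x hx
        simp only
        have hwx := hwpos x (lt_trans hδ0 hx.1) hx.2
        rw [mul_rpow (hg_pos _).le (rpow_nonneg hwx.le _),
          ← Real.rpow_mul hwx.le,
          show 1/k * k = 1 by field_simp, Real.rpow_one]
      rw [e1, e2] at hH
      exact hH
    -- Step E : the power-weight integral
    have hE0 : 0 ≤ ∫ s in δ..r, s ^ (ε-1) := by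
      apply intervalIntegral.integral_nonneg hδr'
      intro u hu
      exact rpow_nonneg (le_trans hδ0.le hu.1) _
    have hE : (∫ s in δ..r, s ^ (ε-1)) ≤ R ^ ε / ε := by
      rw [integral_rpow (Or.inl (by linarith : (-1:ℝ) < ε-1)), sub_add_cancel]
      have h1 : r ^ ε ≤ R ^ ε := Real.rpow_le_rpow hr0.le hrR.le hε1.le
      have h2 : (0:ℝ) ≤ δ ^ ε := rpow_nonneg hδ0.le _
      gcongr
      linarith
    -- Step F : change of variables
    have hvmono : v δ ≤ v r := (hmono ⟨hδ0.le, hδr'⟩ ⟨hr0.le, le_rfl⟩ hδr).le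
    have hsub : ∫ s in δ..r, g (v s) ^ k * w s = ∫ u in (v δ)..(v r), g u ^ k := by
      have h1 : ∀ x ∈ uIcc δ r, HasDerivAt v (w x) x := by
        intro x hx
        rw [uIcc_of_le hδr'] at hx
        exact hvd x (lt_of_lt_of_le hδ0 hx.1) (lt_of_le_of_lt hx.2 hrR)
      have h2 : ContinuousOn w (uIcc δ r) := by
        rw [uIcc_of_le hδr']
        exact fun x hx =>
          (hwcont x (lt_of_lt_of_le hδ0 hx.1) hx.2).continuousWithinAt
      have h3 := intervalIntegral.integral_comp_smul_deriv h1 h2 hGcont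
      rw [← h3]
      apply intervalIntegral.integral_congr
      intro x _
      simp [Function.comp, smul_eq_mul, mul_comm]
    have hF2 : ∫ u in (v δ)..(v r), g u ^ k ≤ ∫ u in a..(v r), g u ^ k := by
      have hint1 : IntervalIntegrable (fun u => g u ^ k) volume a (v δ) :=
        hGcont.intervalIntegrable _ _
      have hint2 : IntervalIntegrable (fun u => g u ^ k) volume (v δ) (v r) :=
        hGcont.intervalIntegrable _ _
      have hadd := intervalIntegral.integral_add_adjacent_intervals hint1 hint2
      have hnn : 0 ≤ ∫ u in a..(v δ), g u ^ k :=
        intervalIntegral.integral_nonneg (hva δ hδ0.le hδr') (fun u _ => hGnonneg u)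
      linarith
    -- assemble
    have hRe0 : (0:ℝ) ≤ R ^ ε / ε := div_nonneg (rpow_nonneg hR.le _) hε1.le
    calc r ^ (-(q*e)) * (F r ^ γ - F δ ^ γ)
        ≤ γ * C ^ (-(1/k)) *
            ∫ s in δ..r, s ^ (τ-1-θ*q) * (g (v s) * w s ^ (1/k)) := hC1
      _ ≤ γ * C ^ (-(1/k)) *
            ((∫ s in δ..r, s ^ (ε-1)) ^ (1/p) * (∫ s in δ..r, g (v s) ^ k * w s) ^ (1/k)) := by
          exact mul_le_mul_of_nonneg_left hHold
            (mul_nonneg hγ0.le (rpow_nonneg hC.le _))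
      _ ≤ γ * C ^ (-(1/k)) *
            ((R ^ ε / ε) ^ (1/p) * (∫ s in a..(v r), g s ^ k) ^ (1/k)) := by
          apply mul_le_mul_of_nonneg_left _
            (mul_nonneg hγ0.le (rpow_nonneg hC.le _))
          apply mul_le_mul
          · exact Real.rpow_le_rpow hE0 hE (one_div_nonneg.mpr hppos.le)
          · refine Real.rpow_le_rpow hwInt ?_ (one_div_nonneg.mpr hk0.le)
            rw [hsub]
            exact hF2
          · exact rpow_nonneg hwInt _
          · exact rpow_nonneg hRe0 _
      _ = γ * C ^ (-(1/k)) * (R ^ ε / ε) ^ (1/p) *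
            (∫ s in a..(v r), g s ^ k) ^ (1/k) := by ring
  -- the limit δ → 0⁺
  have hFle : ∀ t, 0 ≤ t → t ≤ r → F t ≤ M / τ * t ^ τ := by
    intro t h0 htr
    have hb : F t ≤ ∫ s in (0:ℝ)..t, M * s ^ (τ - 1) := by
      apply intervalIntegral.integral_mono_on h0 (hInt t h0 htr)
        ((intervalIntegral.intervalIntegrable_rpow' (by linarith)).const_mul M)
      intro x hx
      calc x ^ (τ-1) * g (v x) ≤ x ^ (τ-1) * M :=
            mul_le_mul_of_nonneg_left (hgvM x ⟨hx.1, hx.2.trans htr⟩) (rpow_nonneg hx.1 _)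
        _ = M * x ^ (τ-1) := mul_comm _ _
    rw [intervalIntegral.integral_const_mul, integral_rpow (Or.inl (by linarith)),
      sub_add_cancel, Real.zero_rpow hτ0.ne', sub_zero] at hb
    calc F t ≤ M * (t ^ τ / τ) := hb
      _ = M / τ * t ^ τ := by ring
  have hlim : Tendsto (fun δ => r ^ (-(q * e)) * (F r ^ γ - F δ ^ γ)) (𝓝[>] (0:ℝ))
      (𝓝 (r ^ (-(q * e)) * F r ^ γ)) := by
    have h1 : Tendsto F (𝓝[>] (0:ℝ)) (𝓝 0) := by
      apply squeeze_zero'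
      · filter_upwards [Ioo_mem_nhdsGT_of_mem (Set.left_mem_Ico.mpr hr0)] with δ hδ
        exact hFnonneg δ hδ.1.le hδ.2.le
      · filter_upwards [Ioo_mem_nhdsGT_of_mem (Set.left_mem_Ico.mpr hr0)] with δ hδ
        exact hFle δ hδ.1.le hδ.2.le
      · have hmt : Tendsto (fun δ : ℝ => M / τ * δ ^ τ) (𝓝 (0:ℝ)) (𝓝 (M / τ * (0:ℝ) ^ τ)) :=
          ((Real.continuousAt_rpow_const 0 τ (Or.inr hτ0.le)).const_mul (M / τ))
        rw [Real.zero_rpow hτ0.ne', mul_zero] at hmt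
        exact hmt.mono_left nhdsWithin_le_nhds
    have h2 : Tendsto (fun δ => F δ ^ γ) (𝓝[>] (0:ℝ)) (𝓝 0) := by
      have hc : ContinuousAt (fun x : ℝ => x ^ γ) 0 :=
        Real.continuousAt_rpow_const 0 γ (Or.inr hγ0.le)
      have h3 := hc.tendsto.comp h1
      rwa [Real.zero_rpow hγ0.ne'] at h3
    have h4 : Tendsto (fun δ => r ^ (-(q * e)) * (F r ^ γ - F δ ^ γ)) (𝓝[>] (0:ℝ))
        (𝓝 (r ^ (-(q * e)) * (F r ^ γ - 0))) := (tendsto_const_nhds.sub h2).const_mul _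
    rwa [sub_zero] at h4
  have final : r ^ (-(q * e)) * F r ^ γ ≤
      γ * C ^ (-(1 / k)) * (R ^ ε / ε) ^ (1 / p) * (∫ s in a..(v r), g s ^ k) ^ (1 / k) := by
    refine le_of_tendsto hlim ?_
    filter_upwards [Ioo_mem_nhdsGT_of_mem (by constructor <;> [rfl; exact hr0] :
      (0:ℝ) ∈ Ico (0:ℝ) r)] with δ hδ
    exact claim δ hδ
  -- conclude
  have hdr : deriv v r = C * r ^ (-q) * F r ^ (1 / θ) := (hvd r hr0 hrR).deriv
  have hLHS : (deriv v r) ^ e = C ^ e * (r ^ (-(q * e)) * F r ^ γ) := by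
    rw [hdr, mul_rpow (by positivity) (rpow_nonneg (hFnonneg r hr0.le le_rfl) _),
      mul_rpow hC.le (rpow_nonneg hr0.le _),
      ← Real.rpow_mul hr0.le, ← Real.rpow_mul (hFnonneg r hr0.le le_rfl),
      show -q * e = -(q * e) by ring, show 1 / θ * e = γ by rw [hγdef]; ring,
      mul_assoc]
  rw [hLHS, hpinv.symm]
  calc C ^ e * (r ^ (-(q * e)) * F r ^ γ) ≤
      C ^ e * (γ * C ^ (-(1 / k)) * (R ^ ε / ε) ^ (1 / p) *
        (∫ s in a..(v r), g s ^ k) ^ (1 / k)) := by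
        exact mul_le_mul_of_nonneg_left final (rpow_nonneg hC.le e)
    _ = e / θ * C ^ θ * (R ^ ε / ε) ^ (1 / p) * (∫ s in a..(v r), g s ^ k) ^ (1 / k) := by
        have : C ^ e * C ^ (-(1 / k)) = C ^ θ := by
          rw [← Real.rpow_add hC, hedef]; ring_nf
        rw [hγdef, ← this]; ring
end

section
/- Let g : ℝ → ℝ be continuous, non-decreasing and everywhere positive, let C > 0, q ≥ 0, θ > 0 and τ > θq be constants, let R ∈ (0,∞], and let v : [0,R) → ℝ solve the Cauchy problem (★). Then for every r ∈ (0,R): v''(r) ≥ C · (1/θ − q/τ) · r^{τ − (q+1)} · g(v(r)) · (∫_0^r s^{τ−1} g(v(s)) ds)^{1/θ − 1} > 0. -/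
open Real MeasureTheory Set Filter Topology ENNReal

/-- The convexity estimate (2.29) in the proof of Theorem 1.1: every solution of (★)
with `τ > θq` satisfies, for `r ∈ (0, R)`,
`v''(r) ≥ C (1/θ - q/τ) r^{τ-(q+1)} g(v(r)) (∫_0^r s^{τ-1} g(v(s)) ds)^{1/θ-1} > 0`. -/
theorem convexity_estimate
    (g : ℝ → ℝ) (hg_cont : Continuous g) (hg_mono : Monotone g) (hg_pos : ∀ t, 0 < g t)
    (C q θ τ a : ℝ) (hC : 0 < C) (hq : 0 ≤ q) (hθ : 0 < θ) (hτ : θ * q < τ)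
    (R : ℝ≥0∞) (v : ℝ → ℝ)
    (hv : SolvesCauchy C q τ θ a g R v) :
    ∀ r : ℝ, 0 < r → ENNReal.ofReal r < R →
      DifferentiableAt ℝ (deriv v) r ∧
      C * (1 / θ - q / τ) * r ^ (τ - (q + 1)) * g (v r) *
          (∫ s in (0:ℝ)..r, s ^ (τ - 1) * g (v s)) ^ (1 / θ - 1) ≤
        deriv (deriv v) r ∧
      0 < C * (1 / θ - q / τ) * r ^ (τ - (q + 1)) * g (v r) *
          (∫ s in (0:ℝ)..r, s ^ (τ - 1) * g (v s)) ^ (1 / θ - 1) := by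
  obtain ⟨hvcont, -, hvderiv⟩ := hv
  have hτ0 : 0 < τ := lt_of_le_of_lt (mul_nonneg hθ.le hq) hτ
  intro r hr hrR
  set f : ℝ → ℝ := fun s => s ^ (τ - 1) * g (v s) with hf_def
  set U : Set ℝ := {x : ℝ | 0 < x ∧ ENNReal.ofReal x < R} with hU_def
  have hUopen : IsOpen U := by
    have h1 : IsOpen {x : ℝ | 0 < x} := isOpen_lt continuous_const continuous_id
    have h2 : IsOpen {x : ℝ | ENNReal.ofReal x < R} :=
      isOpen_Iio.preimage ENNReal.continuous_ofReal
    exact h1.inter h2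
  have hrU : r ∈ U := ⟨hr, hrR⟩
  have hsub : Icc (0:ℝ) r ⊆ {x : ℝ | 0 ≤ x ∧ ENNReal.ofReal x < R} := fun x hx =>
    ⟨hx.1, lt_of_le_of_lt (ENNReal.ofReal_le_ofReal hx.2) hrR⟩
  have hUsub : U ⊆ {x : ℝ | 0 ≤ x ∧ ENNReal.ofReal x < R} := fun x hx => ⟨hx.1.le, hx.2⟩
  have hvIcc : ContinuousOn v (Icc 0 r) := hvcont.mono hsub
  have hgvIcc : ContinuousOn (fun s => g (v s)) (Icc 0 r) := hg_cont.comp_continuousOn hvIcc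
  have hrpowInt : IntervalIntegrable (fun s : ℝ => s ^ (τ - 1)) volume 0 r :=
    intervalIntegral.intervalIntegrable_rpow' (by linarith)
  have hInt : IntervalIntegrable f volume 0 r := by
    apply hrpowInt.mul_continuousOn
    rwa [uIcc_of_le hr.le]
  have hFnn : ∀ x : ℝ, 0 ≤ x → 0 ≤ ∫ s in (0:ℝ)..x, f s := fun x hx =>
    intervalIntegral.integral_nonneg hx fun u hu =>
      mul_nonneg (Real.rpow_nonneg hu.1 _) (hg_pos _).le
  have hmono : MonotoneOn v (Icc 0 r) := by
    have hdiff : ∀ x ∈ interior (Icc (0:ℝ) r), HasDerivAt v (cauchyRHS C q τ θ g v x) x := by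
      intro x hx
      rw [interior_Icc] at hx
      exact hvderiv x hx.1 (lt_of_le_of_lt (ENNReal.ofReal_le_ofReal hx.2.le) hrR)
    refine monotoneOn_of_deriv_nonneg (convex_Icc 0 r) hvIcc
      (fun x hx => (hdiff x hx).differentiableAt.differentiableWithinAt) (fun x hx => ?_)
    rw [(hdiff x hx).deriv]
    rw [interior_Icc] at hx
    exact mul_nonneg (mul_nonneg hC.le (Real.rpow_nonneg hx.1.le _))
      (Real.rpow_nonneg (hFnn x hx.1.le) _)
  have hFpos : 0 < ∫ s in (0:ℝ)..r, f s :=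
    intervalIntegral.intervalIntegral_pos_of_pos_on hInt
      (fun x hx => mul_pos (Real.rpow_pos_of_pos hx.1 _) (hg_pos _)) hr
  have hFle : (∫ s in (0:ℝ)..r, f s) ≤ g (v r) * (r ^ (τ - 1) * r) / τ := by
    have h1 : (∫ s in (0:ℝ)..r, f s) ≤ ∫ s in (0:ℝ)..r, s ^ (τ - 1) * g (v r) := by
      refine intervalIntegral.integral_mono_on hr.le hInt (hrpowInt.mul_const _) fun x hx => ?_
      exact mul_le_mul_of_nonneg_left (hg_mono (hmono hx (right_mem_Icc.2 hr.le) hx.2))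
        (Real.rpow_nonneg hx.1 _)
    have h2 : (∫ s in (0:ℝ)..r, s ^ (τ - 1) * g (v r)) = g (v r) * (r ^ (τ - 1) * r) / τ := by
      rw [intervalIntegral.integral_mul_const, integral_rpow (Or.inl (by linarith)),
        Real.rpow_add hr, Real.rpow_one,
        Real.zero_rpow (ne_of_gt (by linarith : (0:ℝ) < τ - 1 + 1))]
      ring
    exact h1.trans_eq h2
  have hfU : ContinuousOn f U := by
    apply ContinuousOn.mul
    · exact fun x hx =>
        (Real.continuousAt_rpow_const x (τ - 1) (Or.inl hx.1.ne')).continuousWithinAt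
    · exact hg_cont.comp_continuousOn (hvcont.mono hUsub)
  have hF' : HasDerivAt (fun u => ∫ s in (0:ℝ)..u, f s) (f r) r :=
    intervalIntegral.integral_hasDerivAt_right hInt
      (hfU.stronglyMeasurableAtFilter hUopen r hrU)
      (hfU.continuousAt (hUopen.mem_nhds hrU))
  have hRHS : HasDerivAt (fun x => C * x ^ (-q) * (∫ s in (0:ℝ)..x, f s) ^ (1 / θ))
      (C * (-q * r ^ (-q - 1)) * (∫ s in (0:ℝ)..r, f s) ^ (1 / θ)
        + C * r ^ (-q) * (f r * (1 / θ) * (∫ s in (0:ℝ)..r, f s) ^ (1 / θ - 1))) r := by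
    have h1 : HasDerivAt (fun x : ℝ => C * x ^ (-q)) (C * (-q * r ^ (-q - 1))) r :=
      (Real.hasDerivAt_rpow_const (Or.inl hr.ne')).const_mul C
    exact h1.mul (hF'.rpow_const (Or.inl hFpos.ne'))
  have hEq : deriv v =ᶠ[𝓝 r] fun x => C * x ^ (-q) * (∫ s in (0:ℝ)..x, f s) ^ (1 / θ) :=
    Filter.eventually_of_mem (hUopen.mem_nhds hrU) (fun x hx => (hvderiv x hx.1 hx.2).deriv)
  have hv'' := hRHS.congr_of_eventuallyEq hEq
  have hsubpos : 0 < 1 / θ - q / τ := by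
    rw [sub_pos, div_lt_div_iff₀ hτ0 hθ]
    nlinarith
  refine ⟨hv''.differentiableAt, ?_, ?_⟩
  · rw [hv''.deriv]
    have hfr : f r = r ^ (τ - 1) * g (v r) := rfl
    have e1 : r ^ (-q) = r ^ (-q - 1) * r := by
      have h2 := Real.rpow_add hr (-q - 1) 1
      rw [Real.rpow_one, show -q - 1 + 1 = -q from by ring] at h2
      exact h2
    have e2 : r ^ (τ - (q + 1)) = r ^ (τ - 1) * (r ^ (-q - 1) * r) := by
      have h2 := Real.rpow_add hr (-q - 1) 1
      rw [Real.rpow_one] at h2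
      have h1 := Real.rpow_add hr (τ - 1) (-q - 1 + 1)
      rw [h2, show τ - 1 + (-q - 1 + 1) = τ - (q + 1) from by ring] at h1
      exact h1
    have e3 : (∫ s in (0:ℝ)..r, f s) ^ (1 / θ)
        = (∫ s in (0:ℝ)..r, f s) * (∫ s in (0:ℝ)..r, f s) ^ (1 / θ - 1) := by
      have h2 := Real.rpow_add hFpos 1 (1 / θ - 1)
      rw [Real.rpow_one, show 1 + (1 / θ - 1) = 1 / θ from by ring] at h2
      exact h2
    rw [hfr, e1, e2, e3]
    set A := ∫ s in (0:ℝ)..r, f s with hA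
    set X := r ^ (-q - 1 : ℝ) with hX
    set Y := r ^ (τ - 1 : ℝ) with hY
    set P := A ^ (1 / θ - 1 : ℝ) with hPdef
    have hXpos : 0 < X := Real.rpow_pos_of_pos hr _
    have hPpos : 0 < P := Real.rpow_pos_of_pos hFpos _
    have hkey : 0 ≤ (C * q * X * P) * (g (v r) * (Y * r) / τ - A) :=
      mul_nonneg (mul_nonneg (mul_nonneg (mul_nonneg hC.le hq) hXpos.le) hPpos.le)
        (sub_nonneg.2 hFle)
    have expand : C * (-q * X) * (A * P) + C * (X * r) * (Y * g (v r) * (1 / θ) * P)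
        - C * (1 / θ - q / τ) * (Y * (X * r)) * g (v r) * P
        = C * q * X * P * (g (v r) * (Y * r) / τ - A) := by ring
    linarith [hkey, expand]
  · exact mul_pos (mul_pos (mul_pos (mul_pos hC hsubpos) (Real.rpow_pos_of_pos hr _))
      (hg_pos _)) (Real.rpow_pos_of_pos hFpos _)
end
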